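/- arXiv:1012.1032 — 3 statements merged into one kernel-verified Lean document; each statement's English description precedes it below -/
import Mathlib

section
/- Let Z be the arc diagram of the complement of n > 1 disks in S²: one circle carrying 3(n−1) marked points in the order a₁, b₁, a′₁, a₂, b₂, a′₂, …, a_{n−1}, b_{n−1}, a′_{n−1}, together with n−1 further circles each carrying a single marked point b′₁, …, b′_{n−1}, with matching M = {{a_i, a′_i} : 1 ≤ i ≤ n−1} ∪ {{b_i, b′_i} : 1 ≤ i ≤ n−1}. Then B(Z) is isomorphic as an 𝔽₂-algebra to the path algebra over 𝔽₂ of the quiver with vertices I₁, …, I_{n−1}, J₁, …, J_{n−1} and arrows α_i : I_i → J_i, β_i : J_i → I_i (for 1 ≤ i ≤ n−1) and γ_i : I_i → I_{i+1} (for 1 ≤ i ≤ n−2), modulo the two-sided ideal generated by the paths β_i α_i (going β_i then α_i) and γ_i γ_{i+1} (going γ_i then γ_{i+1}); the isomorphism sends α_i to the chord (a_i, b_i), β_i to the chord (b_i, a′_i), and γ_i to the chord (a′_i, a_{i+1}). -/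
/-- An arc diagram: a finite set of marked points, each lying on a circle
(indexed by a natural number) at a given position (the linear order of the
points on the circle, read along the orientation from the basepoint),
together with a perfect matching given by a fixed-point-free involution. -/
structure ArcDiagram where
  P : Type
  [fintypeP : Fintype P]
  [decEqP : DecidableEq P]
  circle : P → ℕ
  pos : P → ℕ
  pos_inj : ∀ p q : P, circle p = circle q → pos p = pos q → p = q
  mtch : P → P
  mtch_invol : ∀ p, mtch (mtch p) = p
  mtch_ne : ∀ p, mtch p ≠ p

attribute [instance] ArcDiagram.fintypeP ArcDiagram.decEqP

namespace ArcDiagram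

/-- The equivalence relation whose classes are the matched pairs. -/
def pairSetoid (Z : ArcDiagram) : Setoid Z.P where
  r p q := q = p ∨ q = Z.mtch p
  iseqv := by
    refine ⟨fun p => Or.inl rfl, ?_, ?_⟩
    · intro p q h
      rcases h with h | h
      · exact Or.inl h.symm
      · right
        rw [h, Z.mtch_invol]
    · intro p q r h1 h2
      rcases h1 with rfl | h1
      · exact h2
      · rcases h2 with rfl | h2
        · exact Or.inr h1
        · left
          rw [h2, h1, Z.mtch_invol]

/-- The set of matched pairs of the arc diagram. -/
def MatchedPair (Z : ArcDiagram) := Quotient Z.pairSetoid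

/-- The matched pair containing a given marked point. -/
def mp (Z : ArcDiagram) (p : Z.P) : Z.MatchedPair := Quotient.mk Z.pairSetoid p

instance (Z : ArcDiagram) : DecidableEq Z.MatchedPair := fun a b =>
  Quotient.recOnSubsingleton₂ a b fun p q =>
    if h : q = p ∨ q = Z.mtch p then .isTrue (Quotient.sound h)
    else .isFalse fun he => h (Quotient.exact he)

instance (Z : ArcDiagram) : Fintype Z.MatchedPair :=
  Fintype.ofSurjective Z.mp fun a => Quotient.inductionOn a fun p => ⟨p, rfl⟩

/-- A chord: an interval in one of the circles, going from `src` to `tgt`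
(with respect to the orientation of the circle). -/
structure Chord (Z : ArcDiagram) where
  src : Z.P
  tgt : Z.P
  circ : Z.circle src = Z.circle tgt
  lt : Z.pos src < Z.pos tgt

theorem Chord.ext' {Z : ArcDiagram} {c d : Chord Z} (h1 : c.src = d.src)
    (h2 : c.tgt = d.tgt) : c = d := by
  cases c; cases d
  cases h1; cases h2
  rfl

instance (Z : ArcDiagram) : DecidableEq (Chord Z) := fun c d =>
  if h : c.src = d.src ∧ c.tgt = d.tgt then .isTrue (Chord.ext' h.1 h.2)
  else .isFalse fun he => h (by cases he; exact ⟨rfl, rfl⟩)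

noncomputable instance (Z : ArcDiagram) : Fintype (Chord Z) :=
  Fintype.ofInjective (fun c => (c.src, c.tgt))
    (fun c d h => Chord.ext' (congrArg Prod.fst h) (congrArg Prod.snd h))

/-- The basis of the algebra `B(Z)`: one idempotent `Iₘ` for each matched pair `m`,
and one element for each chord. -/
inductive BBasis (Z : ArcDiagram) where
  | idem : Z.MatchedPair → BBasis Z
  | chord : Chord Z → BBasis Z
  deriving DecidableEq

def bbasisEquiv (Z : ArcDiagram) : BBasis Z ≃ (Z.MatchedPair ⊕ Chord Z) where
  toFun b := match b with
    | .idem m => .inl m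
    | .chord c => .inr c
  invFun s := match s with
    | .inl m => .idem m
    | .inr c => .chord c
  left_inv b := by cases b <;> rfl
  right_inv s := by cases s <;> rfl

noncomputable instance (Z : ArcDiagram) : Fintype (BBasis Z) :=
  Fintype.ofEquiv _ (Z.bbasisEquiv).symm

/-- The underlying `𝔽₂`-vector space of the algebra `B(Z)`: the space with basis
the idempotents `Iₘ` and the chords, realized as the space of `𝔽₂`-valued
functions on the basis. -/
abbrev BAlg (Z : ArcDiagram) := BBasis Z → ZMod 2

/-- The basis vector corresponding to a basis element. -/
def sngl (Z : ArcDiagram) (b : BBasis Z) : Z.BAlg := fun c => if c = b then 1 else 0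

/-- The structure constants of `B(Z)`: the product of two basis elements. -/
def basisMul (Z : ArcDiagram) : BBasis Z → BBasis Z → Z.BAlg
  | .idem m, .idem m' => if m = m' then Z.sngl (.idem m) else 0
  | .idem m, .chord c => if Z.mp c.src = m then Z.sngl (.chord c) else 0
  | .chord c, .idem m => if Z.mp c.tgt = m then Z.sngl (.chord c) else 0
  | .chord c, .chord d =>
    if h : c.tgt = d.src then
      Z.sngl (.chord
        { src := c.src
          tgt := d.tgt
          circ := by rw [c.circ, h, d.circ]
          lt := by
            refine lt_trans c.lt ?_
            rw [h]
            exact d.lt })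
    else 0

/-- The multiplication on `B(Z)`, extending the structure constants bilinearly. -/
noncomputable def bmul (Z : ArcDiagram) (x y : Z.BAlg) : Z.BAlg := fun b =>
  ∑ u : BBasis Z, ∑ v : BBasis Z, x u * y v * Z.basisMul u v b

/-- The element `1 = ∑ₘ Iₘ` of `B(Z)`. -/
noncomputable def bone (Z : ArcDiagram) : Z.BAlg := ∑ m : Z.MatchedPair, Z.sngl (.idem m)

end ArcDiagram

namespace ArcDiagram

/-- The arc diagram for the complement of `n` disks in `S²`: one circle (circle
`0`) carrying the `3(n−1)` points `a₁, b₁, a′₁, …, a_{n−1}, b_{n−1}, a′_{n−1}`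
(the point `Sum.inl (i, j)` with `j = 0, 1, 2` being `a_{i+1}, b_{i+1}, a′_{i+1}`,
at position `3i + j`), together with `n − 1` further circles, circle `i + 1`
carrying the single point `b′_{i+1} = Sum.inr i`; the matching pairs `aᵢ` with
`a′ᵢ` and `bᵢ` with `b′ᵢ`. -/
def sphereZ (n : ℕ) : ArcDiagram where
  P := (Fin (n - 1) × Fin 3) ⊕ Fin (n - 1)
  circle := fun p =>
    match p with
    | .inl _ => 0
    | .inr i => i.val + 1
  pos := fun p =>
    match p with
    | .inl (i, j) => 3 * i.val + j.val
    | .inr _ => 0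
  pos_inj := by
    rintro (⟨i, j⟩ | i) (⟨i', j'⟩ | i') hc h
    · have h' : 3 * i.val + j.val = 3 * i'.val + j'.val := h
      have hj := j.isLt
      have hj' := j'.isLt
      have : i.val = i'.val ∧ j.val = j'.val := by omega
      rw [show i = i' from Fin.ext this.1, show j = j' from Fin.ext this.2]
    · exact absurd (show 0 = i'.val + 1 from hc) (by omega)
    · exact absurd (show i.val + 1 = 0 from hc) (by omega)
    · have h' : i.val + 1 = i'.val + 1 := hc
      rw [show i = i' from Fin.ext (by omega)]
  mtch := fun p =>
    match p with
    | .inl (i, j) =>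
        if j.val = 0 then .inl (i, 2) else if j.val = 1 then .inr i else .inl (i, 0)
    | .inr i => .inl (i, 1)
  mtch_invol := by
    rintro (⟨i, j⟩ | i)
    · fin_cases j <;> rfl
    · rfl
  mtch_ne := by
    rintro (⟨i, j⟩ | i) h
    · fin_cases j <;> simp_all
    · simp_all

/-- The point `aᵢ`. -/
def aPt (n : ℕ) (i : Fin (n - 1)) : (sphereZ n).P := Sum.inl (i, 0)

/-- The point `bᵢ`. -/
def bPt (n : ℕ) (i : Fin (n - 1)) : (sphereZ n).P := Sum.inl (i, 1)

/-- The point `a′ᵢ`. -/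
def aPt' (n : ℕ) (i : Fin (n - 1)) : (sphereZ n).P := Sum.inl (i, 2)

/-- The chord from `aᵢ` to `bᵢ`. -/
def chAB (n : ℕ) (i : Fin (n - 1)) : Chord (sphereZ n) where
  src := aPt n i
  tgt := bPt n i
  circ := rfl
  lt := by
    show 3 * i.val + (0 : Fin 3).val < 3 * i.val + (1 : Fin 3).val
    omega

/-- The chord from `bᵢ` to `a′ᵢ`. -/
def chBA' (n : ℕ) (i : Fin (n - 1)) : Chord (sphereZ n) where
  src := bPt n i
  tgt := aPt' n i
  circ := rfl
  lt := by
    show 3 * i.val + (1 : Fin 3).val < 3 * i.val + (2 : Fin 3).val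
    omega

/-- The chord from `a′ᵢ` to `a_{i+1}`. -/
def chA'A (n : ℕ) (i : Fin (n - 2)) : Chord (sphereZ n) where
  src := aPt' n ⟨i.val, by omega⟩
  tgt := aPt n ⟨i.val + 1, by omega⟩
  circ := rfl
  lt := by
    show 3 * i.val + (2 : Fin 3).val < 3 * (i.val + 1) + (0 : Fin 3).val
    omega

end ArcDiagram

/-- The vertices of the quiver: `I₁, …, I_{n−1}` (`Sum.inl`) and `J₁, …, J_{n−1}`
(`Sum.inr`). -/
abbrev QuiverVertex (n : ℕ) := Fin (n - 1) ⊕ Fin (n - 1)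

/-- The arrows of the quiver: `αᵢ : Iᵢ → Jᵢ`, `βᵢ : Jᵢ → Iᵢ` and
`γᵢ : Iᵢ → I_{i+1}`. -/
inductive QuiverArrow (n : ℕ) where
  | alpha : Fin (n - 1) → QuiverArrow n
  | beta : Fin (n - 1) → QuiverArrow n
  | gamma : Fin (n - 2) → QuiverArrow n

/-- The source vertex of an arrow. -/
def arrowSrc (n : ℕ) : QuiverArrow n → QuiverVertex n
  | .alpha i => .inl i
  | .beta i => .inr i
  | .gamma i => .inl ⟨i.val, by omega⟩

/-- The target vertex of an arrow. -/
def arrowTgt (n : ℕ) : QuiverArrow n → QuiverVertex n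
  | .alpha i => .inr i
  | .beta i => .inl i
  | .gamma i => .inl ⟨i.val + 1, by omega⟩

/-- The relations presenting the path algebra of the quiver modulo the two-sided
ideal generated by `βᵢαᵢ` and `γᵢγ_{i+1}`, as a quotient of the free algebra on
the vertices (length-zero paths) and the arrows: the vertices are orthogonal
idempotents summing to `1`, each arrow is a path from its source to its target,
and the generating relations of the ideal hold.  Products are written in
diagrammatic order. -/
inductive PathRel (n : ℕ) :
    FreeAlgebra (ZMod 2) (QuiverVertex n ⊕ QuiverArrow n) →
    FreeAlgebra (ZMod 2) (QuiverVertex n ⊕ QuiverArrow n) → Prop where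
  | vertex_idem (v : QuiverVertex n) :
      PathRel n (FreeAlgebra.ι _ (Sum.inl v) * FreeAlgebra.ι _ (Sum.inl v))
        (FreeAlgebra.ι _ (Sum.inl v))
  | vertex_orth (v w : QuiverVertex n) : v ≠ w →
      PathRel n (FreeAlgebra.ι _ (Sum.inl v) * FreeAlgebra.ι _ (Sum.inl w)) 0
  | vertex_sum :
      PathRel n (∑ v : QuiverVertex n, FreeAlgebra.ι _ (Sum.inl v)) 1
  | src_arrow (a : QuiverArrow n) :
      PathRel n (FreeAlgebra.ι _ (Sum.inl (arrowSrc n a)) * FreeAlgebra.ι _ (Sum.inr a))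
        (FreeAlgebra.ι _ (Sum.inr a))
  | arrow_tgt (a : QuiverArrow n) :
      PathRel n (FreeAlgebra.ι _ (Sum.inr a) * FreeAlgebra.ι _ (Sum.inl (arrowTgt n a)))
        (FreeAlgebra.ι _ (Sum.inr a))
  | beta_alpha (i : Fin (n - 1)) :
      PathRel n (FreeAlgebra.ι _ (Sum.inr (.beta i)) * FreeAlgebra.ι _ (Sum.inr (.alpha i))) 0
  | gamma_gamma (i j : Fin (n - 2)) : j.val = i.val + 1 →
      PathRel n (FreeAlgebra.ι _ (Sum.inr (.gamma i)) * FreeAlgebra.ι _ (Sum.inr (.gamma j))) 0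

/-- The path algebra of the quiver over `𝔽₂` modulo the two-sided ideal generated
by the paths `βᵢαᵢ` and `γᵢγ_{i+1}`. -/
abbrev PathAlgQuot (n : ℕ) := RingQuot (PathRel n)

/-- The image of a generator in the quotient of the path algebra. -/
noncomputable def pmk (n : ℕ) (x : QuiverVertex n ⊕ QuiverArrow n) : PathAlgQuot n :=
  RingQuot.mkAlgHom (ZMod 2) (PathRel n) (FreeAlgebra.ι _ x)

open ArcDiagram in
/-- The idempotent of `B(Z)` corresponding to a vertex of the quiver: `Iᵢ`
corresponds to the matched pair `{aᵢ, a′ᵢ}` and `Jᵢ` to the matched pair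
`{bᵢ, b′ᵢ}`. -/
noncomputable def vertexIdem (n : ℕ) (v : QuiverVertex n) : (sphereZ n).MatchedPair :=
  match v with
  | .inl i => (sphereZ n).mp (aPt n i)
  | .inr i => (sphereZ n).mp (bPt n i)


/-! ### Auxiliary development -/

namespace ArcDiagram

variable (Z : ArcDiagram)

/-- Partial multiplication on the basis. -/
def mulO : BBasis Z → BBasis Z → Option (BBasis Z)
  | .idem m, .idem m' => if m = m' then some (.idem m) else none
  | .idem m, .chord c => if Z.mp c.src = m then some (.chord c) else none
  | .chord c, .idem m => if Z.mp c.tgt = m then some (.chord c) else none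
  | .chord c, .chord d =>
    if h : c.tgt = d.src then
      some (.chord
        { src := c.src
          tgt := d.tgt
          circ := by rw [c.circ, h, d.circ]
          lt := by
            refine lt_trans c.lt ?_
            rw [h]
            exact d.lt })
    else none

/-- Interpret an optional basis element as an element of `B(Z)`. -/
def oe : Option (BBasis Z) → Z.BAlg
  | some b => Z.sngl b
  | none => 0

theorem basisMul_eq (u v : BBasis Z) : Z.basisMul u v = Z.oe (Z.mulO u v) := by
  cases u <;> cases v <;> simp only [basisMul, mulO, oe] <;> split_ifs <;> rfl

theorem mulO_assoc (u v w : BBasis Z) :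
    (Z.mulO u v).bind (fun t => Z.mulO t w) = (Z.mulO v w).bind (fun t => Z.mulO u t) := by
  cases u <;> cases v <;> cases w <;>
    simp only [mulO] <;>
    (repeat' first
      | rfl
      | (exact Chord.ext' rfl rfl)
      | split_ifs
      | simp_all [mulO]
      | (intro he; simp_all))

end ArcDiagram

namespace ArcDiagram

variable (Z : ArcDiagram)

theorem sum_sngl_smul (x : Z.BAlg) : ∑ b, x b • Z.sngl b = x := by
  funext c
  simp only [Finset.sum_apply, Pi.smul_apply, sngl, smul_eq_mul, mul_ite, mul_one, mul_zero]
  simp [Finset.sum_ite_eq]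

theorem bmul_add_right (x y y' : Z.BAlg) :
    Z.bmul x (y + y') = Z.bmul x y + Z.bmul x y' := by
  funext b
  simp [bmul, mul_add, add_mul, Finset.sum_add_distrib]

theorem bmul_add_left (x x' y : Z.BAlg) :
    Z.bmul (x + x') y = Z.bmul x y + Z.bmul x' y := by
  funext b
  simp [bmul, mul_add, add_mul, Finset.sum_add_distrib]

theorem bmul_smul_right (r : ZMod 2) (x y : Z.BAlg) :
    Z.bmul x (r • y) = r • Z.bmul x y := by
  funext b
  simp only [bmul, Pi.smul_apply, smul_eq_mul, Finset.mul_sum]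
  refine Finset.sum_congr rfl fun u _ => Finset.sum_congr rfl fun v _ => by ring

theorem bmul_smul_left (r : ZMod 2) (x y : Z.BAlg) :
    Z.bmul (r • x) y = r • Z.bmul x y := by
  funext b
  simp only [bmul, Pi.smul_apply, smul_eq_mul, Finset.mul_sum]
  refine Finset.sum_congr rfl fun u _ => Finset.sum_congr rfl fun v _ => by ring

theorem bmul_zero_right (x : Z.BAlg) : Z.bmul x 0 = 0 := by
  funext b; simp [bmul]

theorem bmul_zero_left (x : Z.BAlg) : Z.bmul 0 x = 0 := by
  funext b; simp [bmul]

theorem bmul_sum_left {ι : Type*} (s : Finset ι) (f : ι → Z.BAlg) (y : Z.BAlg) :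
    Z.bmul (∑ i ∈ s, f i) y = ∑ i ∈ s, Z.bmul (f i) y := by
  classical
  induction s using Finset.induction with
  | empty => simp [bmul_zero_left]
  | insert _ _ h ih => simp [Finset.sum_insert h, bmul_add_left, ih]

theorem bmul_sum_right {ι : Type*} (s : Finset ι) (f : ι → Z.BAlg) (y : Z.BAlg) :
    Z.bmul y (∑ i ∈ s, f i) = ∑ i ∈ s, Z.bmul y (f i) := by
  classical
  induction s using Finset.induction with
  | empty => simp [bmul_zero_right]
  | insert _ _ h ih => simp [Finset.sum_insert h, bmul_add_right, ih]

theorem bmul_sngl_sngl (u v : BBasis Z) :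
    Z.bmul (Z.sngl u) (Z.sngl v) = Z.oe (Z.mulO u v) := by
  rw [← Z.basisMul_eq]
  funext b
  simp only [bmul, sngl]
  rw [Finset.sum_eq_single u]
  · rw [Finset.sum_eq_single v]
    · simp
    · intro t _ ht; simp [ht]
    · simp
  · intro t _ ht
    simp [ht]
  · simp

theorem bmul_oe_sngl (o : Option (BBasis Z)) (w : BBasis Z) :
    Z.bmul (Z.oe o) (Z.sngl w) = Z.oe (o.bind fun t => Z.mulO t w) := by
  cases o with
  | none => simp [oe, bmul_zero_left]
  | some s => simp [oe, bmul_sngl_sngl]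

theorem bmul_sngl_oe (u : BBasis Z) (o : Option (BBasis Z)) :
    Z.bmul (Z.sngl u) (Z.oe o) = Z.oe (o.bind fun t => Z.mulO u t) := by
  cases o with
  | none => simp [oe, bmul_zero_right]
  | some s => simp [oe, bmul_sngl_sngl]

theorem bmul_assoc (x y z : Z.BAlg) :
    Z.bmul (Z.bmul x y) z = Z.bmul x (Z.bmul y z) := by
  conv_lhs => rw [← Z.sum_sngl_smul x, ← Z.sum_sngl_smul y, ← Z.sum_sngl_smul z]
  conv_rhs => rw [← Z.sum_sngl_smul x, ← Z.sum_sngl_smul y, ← Z.sum_sngl_smul z]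
  simp only [bmul_sum_left, bmul_sum_right, bmul_smul_left, bmul_smul_right]
  refine Finset.sum_congr rfl fun u _ => ?_
  rw [Finset.smul_sum, Finset.smul_sum]
  refine Finset.sum_congr rfl fun v _ => ?_
  congr 1
  rw [Finset.smul_sum, Finset.smul_sum]
  refine Finset.sum_congr rfl fun w _ => ?_
  congr 1
  rw [bmul_sngl_sngl, bmul_sngl_sngl, bmul_oe_sngl, bmul_sngl_oe, mulO_assoc]

theorem bone_eq (b : BBasis Z) :
    Z.bone b = match b with | .idem _ => 1 | .chord _ => 0 := by
  cases b with
  | idem m =>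
    simp only [bone, Finset.sum_apply, sngl]
    rw [Finset.sum_eq_single m]
    · simp
    · intro t _ ht; simp [Ne.symm ht]
    · simp
  | chord c => simp [bone, sngl]

theorem bone_sum : Z.bone = ∑ m : Z.MatchedPair, Z.sngl (.idem m) := rfl

theorem bmul_bone_left (x : Z.BAlg) : Z.bmul Z.bone x = x := by
  conv_lhs => rw [← Z.sum_sngl_smul x]
  rw [bone_sum, bmul_sum_right]
  conv_rhs => rw [← Z.sum_sngl_smul x]
  refine Finset.sum_congr rfl fun b _ => ?_
  rw [bmul_smul_right, bmul_sum_left]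
  congr 1
  cases b with
  | idem m' =>
    simp only [bmul_sngl_sngl, mulO]
    rw [Finset.sum_eq_single m']
    · simp [oe]
    · intro t _ ht; simp [ht, oe]
    · simp
  | chord c =>
    simp only [bmul_sngl_sngl, mulO]
    rw [Finset.sum_eq_single (Z.mp c.src)]
    · simp [oe]
    · intro t _ ht; simp [Ne.symm ht, oe]
    · simp

theorem bmul_bone_right (x : Z.BAlg) : Z.bmul x Z.bone = x := by
  conv_lhs => rw [← Z.sum_sngl_smul x]
  rw [bone_sum, bmul_sum_left]
  conv_rhs => rw [← Z.sum_sngl_smul x]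
  refine Finset.sum_congr rfl fun b _ => ?_
  rw [bmul_smul_left, bmul_sum_right]
  congr 1
  cases b with
  | idem m' =>
    simp only [bmul_sngl_sngl, mulO]
    rw [Finset.sum_eq_single m']
    · simp [oe]
    · intro t _ ht; simp [Ne.symm ht, oe]
    · simp
  | chord c =>
    simp only [bmul_sngl_sngl, mulO]
    rw [Finset.sum_eq_single (Z.mp c.tgt)]
    · simp [oe]
    · intro t _ ht; simp [Ne.symm ht, oe]
    · simp

/-- Type synonym for `B(Z)` carrying the (non-pointwise) algebra structure. -/
def BW (_Z : ArcDiagram) : Type := _Z.BAlg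

instance : AddCommGroup Z.BW := inferInstanceAs (AddCommGroup Z.BAlg)
instance : Module (ZMod 2) Z.BW := inferInstanceAs (Module (ZMod 2) Z.BAlg)

noncomputable instance : Ring Z.BW :=
  { (inferInstance : AddCommGroup Z.BW) with
    mul := Z.bmul
    one := Z.bone
    mul_assoc := Z.bmul_assoc
    one_mul := Z.bmul_bone_left
    mul_one := Z.bmul_bone_right
    left_distrib := Z.bmul_add_right
    right_distrib := fun x y z => Z.bmul_add_left x y z
    zero_mul := Z.bmul_zero_left
    mul_zero := Z.bmul_zero_right }

theorem bw_mul (x y : Z.BW) : x * y = Z.bmul x y := rfl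
theorem bw_one : (1 : Z.BW) = Z.bone := rfl

noncomputable instance : Algebra (ZMod 2) Z.BW :=
  Algebra.ofModule (fun r x y => by
      show Z.bmul (r • x) y = r • Z.bmul x y
      exact Z.bmul_smul_left r x y)
    (fun r x y => by
      show Z.bmul x (r • y) = r • Z.bmul x y
      exact Z.bmul_smul_right r x y)

end ArcDiagram

namespace ArcDiagram

/-- The vertex of the quiver associated to a marked point. -/
def vtxP (n : ℕ) : (sphereZ n).P → QuiverVertex n
  | .inl (i, j) => if j.val = 1 then .inr i else .inl i
  | .inr i => .inr i

theorem vtxP_mtch (n : ℕ) (p : (sphereZ n).P) :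
    vtxP n ((sphereZ n).mtch p) = vtxP n p := by
  rcases p with ⟨i, j⟩ | i
  · fin_cases j <;> rfl
  · rfl

/-- The vertex of the quiver associated to a matched pair. -/
def vtxM (n : ℕ) : (sphereZ n).MatchedPair → QuiverVertex n :=
  Quotient.lift (vtxP n) (by
    rintro p q (rfl | rfl)
    · rfl
    · exact (vtxP_mtch n p).symm)

theorem vtxM_mp (n : ℕ) (p : (sphereZ n).P) : vtxM n ((sphereZ n).mp p) = vtxP n p := rfl

theorem mp_aPt' (n : ℕ) (i : Fin (n - 1)) :
    (sphereZ n).mp (aPt' n i) = (sphereZ n).mp (aPt n i) :=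
  Quotient.sound (Or.inr rfl)

theorem mp_bPt' (n : ℕ) (i : Fin (n - 1)) :
    (sphereZ n).mp (Sum.inr i) = (sphereZ n).mp (bPt n i) :=
  Quotient.sound (Or.inr rfl)

theorem vertexIdem_vtxM (n : ℕ) (m : (sphereZ n).MatchedPair) :
    vertexIdem n (vtxM n m) = m := by
  induction m using Quotient.ind with
  | _ p =>
    rcases p with ⟨i, j⟩ | i
    · fin_cases j
      · rfl
      · rfl
      · exact (mp_aPt' n i).symm
    · exact (mp_bPt' n i).symm

theorem vtxM_vertexIdem (n : ℕ) (v : QuiverVertex n) :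
    vtxM n (vertexIdem n v) = v := by
  cases v <;> rfl

theorem vertexIdem_injective (n : ℕ) : Function.Injective (vertexIdem n) := by
  intro v w h
  rw [← vtxM_vertexIdem n v, h, vtxM_vertexIdem]

/-- The equivalence between quiver vertices and matched pairs. -/
noncomputable def vertexEquiv (n : ℕ) : QuiverVertex n ≃ (sphereZ n).MatchedPair where
  toFun := vertexIdem n
  invFun := vtxM n
  left_inv := vtxM_vertexIdem n
  right_inv := vertexIdem_vtxM n

/-- The marked point on circle `0` at position `k`. -/
def ptAt (n k : ℕ) (h : k < 3 * (n - 1)) : (sphereZ n).P :=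
  Sum.inl (⟨k / 3, by omega⟩, ⟨k % 3, by omega⟩)

theorem pos_ptAt (n k : ℕ) (h : k < 3 * (n - 1)) : (sphereZ n).pos (ptAt n k h) = k := by
  show 3 * (k / 3) + k % 3 = k
  omega

theorem ptAt_irrel (n k : ℕ) (h h' : k < 3 * (n - 1)) : ptAt n k h = ptAt n k h' := rfl

theorem ptAt_eq_of_eq (n : ℕ) {k k' : ℕ} (h : k < 3 * (n - 1)) (h' : k' < 3 * (n - 1))
    (hk : k = k') : ptAt n k h = ptAt n k' h' := by subst hk; rfl

/-- The chord from position `s` to position `t` on circle `0`. -/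
def chordAt (n s t : ℕ) (hst : s < t) (ht : t < 3 * (n - 1)) : Chord (sphereZ n) where
  src := ptAt n s (by omega)
  tgt := ptAt n t ht
  circ := rfl
  lt := by rw [pos_ptAt, pos_ptAt]; exact hst

theorem chord_shape {n : ℕ} (c : Chord (sphereZ n)) :
    ∃ (s t : ℕ) (hst : s < t) (ht : t < 3 * (n - 1)),
      c = chordAt n s t hst ht := by
  rcases hs : c.src with ⟨i, j⟩ | i
  · rcases htg : c.tgt with ⟨i', j'⟩ | i'
    · refine ⟨3 * i.val + j.val, 3 * i'.val + j'.val, ?_, ?_, ?_⟩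
      · have := c.lt
        rw [hs, htg] at this
        exact this
      · have hi := i'.isLt
        have hj := j'.isLt
        omega
      · refine Chord.ext' ?_ ?_
        · refine hs.trans ?_
          show _ = Sum.inl (_, _)
          have hj := j.isLt
          congr 1
          ext
          · show i.val = (3 * i.val + j.val) / 3
            omega
          · show j.val = (3 * i.val + j.val) % 3
            omega
        · refine htg.trans ?_
          show _ = Sum.inl (_, _)
          have hj := j'.isLt
          congr 1
          ext
          · show i'.val = (3 * i'.val + j'.val) / 3
            omega
          · show j'.val = (3 * i'.val + j'.val) % 3
            omega
    · exfalso
      have := c.circ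
      rw [hs, htg] at this
      exact absurd this (by simp [sphereZ])
  · exfalso
    rcases htg : c.tgt with ⟨i', j'⟩ | i'
    · have := c.circ
      rw [hs, htg] at this
      exact absurd this (by simp [sphereZ])
    · have hc := c.circ
      rw [hs, htg] at hc
      have : i = i' := by
        have : i.val + 1 = i'.val + 1 := hc
        exact Fin.ext (by omega)
      subst this
      have := c.lt
      rw [hs, htg] at this
      exact absurd this (by simp [sphereZ])

end ArcDiagram

namespace ArcDiagram

open scoped BigOperators

/-- The chord associated to an arrow of the quiver. -/
def arrowChord (n : ℕ) : QuiverArrow n → Chord (sphereZ n)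
  | .alpha i => chAB n i
  | .beta i => chBA' n i
  | .gamma i => chA'A n i

/-- The images of the generators in `B(Z)`. -/
noncomputable def bwGen (n : ℕ) : QuiverVertex n ⊕ QuiverArrow n → BW (sphereZ n)
  | .inl v => (sphereZ n).sngl (.idem (vertexIdem n v))
  | .inr a => (sphereZ n).sngl (.chord (arrowChord n a))

/-- The algebra map from the free algebra to `B(Z)`. -/
noncomputable def freeF (n : ℕ) :
    FreeAlgebra (ZMod 2) (QuiverVertex n ⊕ QuiverArrow n) →ₐ[ZMod 2] BW (sphereZ n) :=
  FreeAlgebra.lift _ (bwGen n)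

theorem mp_src_arrowChord (n : ℕ) (a : QuiverArrow n) :
    (sphereZ n).mp (arrowChord n a).src = vertexIdem n (arrowSrc n a) := by
  cases a with
  | alpha i => rfl
  | beta i => rfl
  | gamma i => exact mp_aPt' n _

theorem mp_tgt_arrowChord (n : ℕ) (a : QuiverArrow n) :
    (sphereZ n).mp (arrowChord n a).tgt = vertexIdem n (arrowTgt n a) := by
  cases a with
  | alpha i => rfl
  | beta i => exact mp_aPt' n _
  | gamma i => rfl

theorem freeF_rel (n : ℕ) : ∀ ⦃x y⦄, PathRel n x y → freeF n x = freeF n y := by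
  intro x y h
  cases h with
  | vertex_idem v =>
    simp only [freeF, map_mul, FreeAlgebra.lift_ι_apply, bwGen]
    erw [bw_mul]; rw [bmul_sngl_sngl]
    simp [mulO, oe] <;> rfl
  | vertex_orth v w hvw =>
    simp only [freeF, map_mul, map_zero, FreeAlgebra.lift_ι_apply, bwGen]
    erw [bw_mul]; rw [bmul_sngl_sngl]
    have : vertexIdem n v ≠ vertexIdem n w := fun he => hvw (vertexIdem_injective n he)
    simp [mulO, oe, this] <;> rfl
  | vertex_sum =>
    simp only [freeF, map_sum, FreeAlgebra.lift_ι_apply, bwGen, map_one]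
    show _ = (1 : BW (sphereZ n))
    rw [bw_one, bone_sum]
    exact Fintype.sum_equiv (vertexEquiv n) _ _ (fun v => rfl)
  | src_arrow a =>
    simp only [freeF, map_mul, FreeAlgebra.lift_ι_apply, bwGen]
    erw [bw_mul]; rw [bmul_sngl_sngl]
    simp [mulO, oe, mp_src_arrowChord] <;> rfl
  | arrow_tgt a =>
    simp only [freeF, map_mul, FreeAlgebra.lift_ι_apply, bwGen]
    erw [bw_mul]; rw [bmul_sngl_sngl]
    simp [mulO, oe, mp_tgt_arrowChord] <;> rfl
  | beta_alpha i =>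
    simp only [freeF, map_mul, map_zero, FreeAlgebra.lift_ι_apply, bwGen]
    erw [bw_mul]; rw [bmul_sngl_sngl]
    have : (arrowChord n (.beta i)).tgt ≠ (arrowChord n (.alpha i)).src := by
      intro h
      simp only [arrowChord, chBA', chAB, aPt, aPt'] at h
      erw [Sum.inl.injEq, Prod.mk.injEq] at h
      exact absurd (congrArg Fin.val h.2) (by norm_num)
    simp [mulO, oe, this] <;> rfl
  | gamma_gamma i j hj =>
    simp only [freeF, map_mul, map_zero, FreeAlgebra.lift_ι_apply, bwGen]
    erw [bw_mul]; rw [bmul_sngl_sngl]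
    have : (arrowChord n (.gamma i)).tgt ≠ (arrowChord n (.gamma j)).src := by
      intro h
      simp only [arrowChord, chA'A, aPt, aPt'] at h
      erw [Sum.inl.injEq, Prod.mk.injEq] at h
      exact absurd (congrArg Fin.val h.2) (by norm_num)
    simp [mulO, oe, this] <;> rfl

/-- The algebra map from the quotient of the path algebra to `B(Z)`. -/
noncomputable def phiA (n : ℕ) : PathAlgQuot n →ₐ[ZMod 2] BW (sphereZ n) :=
  RingQuot.liftAlgHom (ZMod 2) ⟨freeF n, freeF_rel n⟩

theorem phiA_pmk (n : ℕ) (g : QuiverVertex n ⊕ QuiverArrow n) :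
    phiA n (pmk n g) = bwGen n g := by
  rw [phiA, pmk, RingQuot.liftAlgHom_mkAlgHom_apply, freeF, FreeAlgebra.lift_ι_apply]

end ArcDiagram

namespace ArcDiagram

/-- The generator of the path algebra at position `k` of circle `0`. -/
noncomputable def genP (n k : ℕ) : PathAlgQuot n :=
  if h : k % 3 = 0 ∧ k / 3 < n - 1 then pmk n (.inr (.alpha ⟨k / 3, h.2⟩))
  else if h : k % 3 = 1 ∧ k / 3 < n - 1 then pmk n (.inr (.beta ⟨k / 3, h.2⟩))
  else if h : k % 3 = 2 ∧ k / 3 < n - 2 then pmk n (.inr (.gamma ⟨k / 3, h.2⟩))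
  else 0

theorem genP_alpha (n k : ℕ) (h0 : k % 3 = 0) (h1 : k / 3 < n - 1) :
    genP n k = pmk n (.inr (.alpha ⟨k / 3, h1⟩)) := by
  rw [genP, dif_pos ⟨h0, h1⟩]

theorem genP_beta (n k : ℕ) (h0 : k % 3 = 1) (h1 : k / 3 < n - 1) :
    genP n k = pmk n (.inr (.beta ⟨k / 3, h1⟩)) := by
  rw [genP, dif_neg (by omega), dif_pos ⟨h0, h1⟩]

theorem genP_gamma (n k : ℕ) (h0 : k % 3 = 2) (h1 : k / 3 < n - 2) :
    genP n k = pmk n (.inr (.gamma ⟨k / 3, h1⟩)) := by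
  rw [genP, dif_neg (by omega), dif_neg (by omega), dif_pos ⟨h0, h1⟩]

theorem genP_zero (n k : ℕ) (h0 : k % 3 = 2) (h1 : ¬ k / 3 < n - 2) :
    genP n k = 0 := by
  rw [genP, dif_neg (by omega), dif_neg (by omega), dif_neg (by tauto)]

/-- The product of the elementary generators along positions `s, s+1, …, s+l-1`. -/
noncomputable def chainP (n s : ℕ) : ℕ → PathAlgQuot n
  | 0 => 1
  | l + 1 => chainP n s l * genP n (s + l)

/-- The element of the path-algebra quotient corresponding to a basis element of `B(Z)`. -/
noncomputable def pathOf (n : ℕ) : BBasis (sphereZ n) → PathAlgQuot n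
  | .idem m => pmk n (.inl (vtxM n m))
  | .chord c => chainP n ((sphereZ n).pos c.src) ((sphereZ n).pos c.tgt - (sphereZ n).pos c.src)

theorem pathOf_chordAt (n s t : ℕ) (hst : s < t) (ht : t < 3 * (n - 1)) :
    pathOf n (.chord (chordAt n s t hst ht)) = chainP n s (t - s) := by
  simp only [pathOf, chordAt, pos_ptAt]

theorem ptAt_eq_inl (n k : ℕ) (h : k < 3 * (n - 1)) (i : Fin (n - 1)) (j : Fin 3)
    (hij : k = 3 * i.val + j.val) : ptAt n k h = Sum.inl (i, j) := by
  show (Sum.inl (_, _) : (sphereZ n).P) = Sum.inl (_, _)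
  have hj := j.isLt
  congr 1
  ext
  · show k / 3 = i.val
    omega
  · show k % 3 = j.val
    omega

theorem vtxP_ptAt_ne1 (n k : ℕ) (h : k < 3 * (n - 1)) (h1 : k % 3 ≠ 1) :
    vtxP n (ptAt n k h) = .inl ⟨k / 3, by omega⟩ := by
  show (if (⟨k % 3, by omega⟩ : Fin 3).val = 1 then _ else Sum.inl _) = _
  rw [if_neg h1]

theorem vtxP_ptAt_eq1 (n k : ℕ) (h : k < 3 * (n - 1)) (h1 : k % 3 = 1) :
    vtxP n (ptAt n k h) = .inr ⟨k / 3, by omega⟩ := by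
  show (if (⟨k % 3, by omega⟩ : Fin 3).val = 1 then Sum.inr _ else _) = _
  rw [if_pos h1]

theorem genP_spec (n k : ℕ) (hk : k + 1 < 3 * (n - 1)) :
    ∃ a : QuiverArrow n, genP n k = pmk n (.inr a) ∧
      arrowSrc n a = vtxP n (ptAt n k (by omega)) ∧
      arrowTgt n a = vtxP n (ptAt n (k + 1) hk) ∧
      arrowChord n a = chordAt n k (k + 1) (by omega) hk := by
  have hv0 : ((0 : Fin 3)).val = 0 := rfl
  have hv1 : ((1 : Fin 3)).val = 1 := rfl
  have hv2 : ((2 : Fin 3)).val = 2 := rfl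
  have h3 : k % 3 = 0 ∨ k % 3 = 1 ∨ k % 3 = 2 := by omega
  rcases h3 with h0 | h0 | h0
  · have hq : k / 3 < n - 1 := by omega
    refine ⟨.alpha ⟨k / 3, hq⟩, genP_alpha n k h0 hq, ?_, ?_, ?_⟩
    · rw [vtxP_ptAt_ne1 n k (by omega) (by omega)]; rfl
    · rw [vtxP_ptAt_eq1 n (k + 1) hk (by omega)]
      show Sum.inr _ = Sum.inr _
      congr 1
      ext
      show k / 3 = (k + 1) / 3
      omega
    · refine Chord.ext' ?_ ?_
      · exact (ptAt_eq_inl n k (by omega) ⟨k / 3, hq⟩ 0 (by show k = 3 * (k / 3) + _; omega)).symm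
      · exact (ptAt_eq_inl n (k + 1) hk ⟨k / 3, hq⟩ 1
          (by show k + 1 = 3 * (k / 3) + _; omega)).symm
  · have hq : k / 3 < n - 1 := by omega
    refine ⟨.beta ⟨k / 3, hq⟩, genP_beta n k h0 hq, ?_, ?_, ?_⟩
    · rw [vtxP_ptAt_eq1 n k (by omega) h0]; rfl
    · rw [vtxP_ptAt_ne1 n (k + 1) hk (by omega)]
      show Sum.inl _ = Sum.inl _
      congr 1
      ext
      show k / 3 = (k + 1) / 3
      omega
    · refine Chord.ext' ?_ ?_
      · exact (ptAt_eq_inl n k (by omega) ⟨k / 3, hq⟩ 1 (by show k = 3 * (k / 3) + _; omega)).symm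
      · exact (ptAt_eq_inl n (k + 1) hk ⟨k / 3, hq⟩ 2
          (by show k + 1 = 3 * (k / 3) + _; omega)).symm
  · have hq : k / 3 < n - 2 := by omega
    refine ⟨.gamma ⟨k / 3, hq⟩, genP_gamma n k h0 hq, ?_, ?_, ?_⟩
    · rw [vtxP_ptAt_ne1 n k (by omega) (by omega)]
      rfl
    · rw [vtxP_ptAt_ne1 n (k + 1) hk (by omega)]
      show Sum.inl _ = Sum.inl _
      congr 1
      ext
      show (k / 3 : ℕ) + 1 = (k + 1) / 3
      omega
    · refine Chord.ext' ?_ ?_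
      · exact (ptAt_eq_inl n k (by omega) ⟨k / 3, by omega⟩ 2
          (by show k = 3 * (k / 3) + _; omega)).symm
      · exact (ptAt_eq_inl n (k + 1) hk ⟨k / 3 + 1, by omega⟩ 0
          (by show k + 1 = 3 * (k / 3 + 1) + _; omega)).symm

theorem phiA_genP (n k : ℕ) (hk : k + 1 < 3 * (n - 1)) :
    phiA n (genP n k) =
      (sphereZ n).sngl (.chord (chordAt n k (k + 1) (by omega) hk)) := by
  obtain ⟨a, ha, -, -, hc⟩ := genP_spec n k hk
  rw [ha, phiA_pmk, bwGen, hc]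

theorem mulO_chordAt (n s t u : ℕ) (h1 : s < t) (h2 : t < u) (h3 : u < 3 * (n - 1))
    (ht : t < 3 * (n - 1)) :
    (sphereZ n).mulO (.chord (chordAt n s t h1 ht)) (.chord (chordAt n t u h2 h3)) =
      some (.chord (chordAt n s u (h1.trans h2) h3)) := by
  simp only [mulO]
  rw [dif_pos (show (chordAt n s t h1 ht).tgt = (chordAt n t u h2 h3).src from rfl)]
  exact congrArg some (congrArg BBasis.chord (Chord.ext' rfl rfl))

theorem chainP_one (n s : ℕ) : chainP n s 1 = genP n s := by
  show chainP n s 0 * genP n (s + 0) = genP n s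
  rw [show chainP n s 0 = 1 from rfl, one_mul]
  rfl

theorem phiA_chainP (n s : ℕ) :
    ∀ l, ∀ (hst : s < s + l) (h : s + l < 3 * (n - 1)),
      phiA n (chainP n s l) = (sphereZ n).sngl (.chord (chordAt n s (s + l) hst h)) := by
  intro l
  induction l with
  | zero => intro hst _; omega
  | succ l ih =>
    intro hst h
    rcases Nat.eq_zero_or_pos l with rfl | hl
    · rw [show chainP n s (0 + 1) = chainP n s 1 from rfl, chainP_one,
        phiA_genP n s (by omega)]
    · show phiA n (chainP n s l * genP n (s + l)) = _
      rw [map_mul, ih (by omega) (by omega), phiA_genP n (s + l) (by omega)]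
      erw [bw_mul]
      rw [bmul_sngl_sngl,
        mulO_chordAt n s (s + l) (s + l + 1) (by omega) (by omega) (by omega) (by omega)]
      show (sphereZ n).sngl _ = _
      exact congrArg _ (congrArg _ (Chord.ext' rfl (ptAt_eq_of_eq n (by omega) (by omega) (by omega))))

theorem phiA_pathOf (n : ℕ) (b : BBasis (sphereZ n)) :
    phiA n (pathOf n b) = (sphereZ n).sngl b := by
  cases b with
  | idem m =>
    show phiA n (pmk n (.inl (vtxM n m))) = _
    rw [phiA_pmk, bwGen, vertexIdem_vtxM]
  | chord c =>
    obtain ⟨s, t, hst, ht, rfl⟩ := chord_shape c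
    rw [pathOf_chordAt n s t hst ht,
      phiA_chainP n s (t - s) (by omega) (by omega)]
    exact congrArg _ (congrArg _ (Chord.ext' rfl (ptAt_eq_of_eq n (by omega) (by omega) (by omega))))

end ArcDiagram

namespace ArcDiagram

theorem pmk_mul_inl_self (n : ℕ) (v : QuiverVertex n) :
    pmk n (.inl v) * pmk n (.inl v) = pmk n (.inl v) := by
  simp only [pmk]
  rw [← map_mul]
  exact RingQuot.mkAlgHom_rel _ (PathRel.vertex_idem v)

theorem pmk_mul_inl_ne (n : ℕ) {v w : QuiverVertex n} (hvw : v ≠ w) :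
    pmk n (.inl v) * pmk n (.inl w) = 0 := by
  simp only [pmk]
  rw [← map_mul]
  have := RingQuot.mkAlgHom_rel (ZMod 2) (PathRel.vertex_orth v w hvw)
  rwa [map_zero] at this

theorem pmk_sum_inl (n : ℕ) : ∑ v : QuiverVertex n, pmk n (.inl v) = 1 := by
  simp only [pmk]
  rw [← map_sum]
  have := RingQuot.mkAlgHom_rel (ZMod 2) (PathRel.vertex_sum (n := n))
  rwa [map_one] at this

theorem pmk_src_mul (n : ℕ) (a : QuiverArrow n) :
    pmk n (.inl (arrowSrc n a)) * pmk n (.inr a) = pmk n (.inr a) := by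
  simp only [pmk]
  rw [← map_mul]
  exact RingQuot.mkAlgHom_rel _ (PathRel.src_arrow a)

theorem pmk_mul_tgt (n : ℕ) (a : QuiverArrow n) :
    pmk n (.inr a) * pmk n (.inl (arrowTgt n a)) = pmk n (.inr a) := by
  simp only [pmk]
  rw [← map_mul]
  exact RingQuot.mkAlgHom_rel _ (PathRel.arrow_tgt a)

theorem pmk_beta_alpha (n : ℕ) (i : Fin (n - 1)) :
    pmk n (.inr (.beta i)) * pmk n (.inr (.alpha i)) = 0 := by
  simp only [pmk]
  rw [← map_mul]
  have := RingQuot.mkAlgHom_rel (ZMod 2) (PathRel.beta_alpha i)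
  rwa [map_zero] at this

theorem pmk_gamma_gamma (n : ℕ) (i j : Fin (n - 2)) (hj : j.val = i.val + 1) :
    pmk n (.inr (.gamma i)) * pmk n (.inr (.gamma j)) = 0 := by
  simp only [pmk]
  rw [← map_mul]
  have := RingQuot.mkAlgHom_rel (ZMod 2) (PathRel.gamma_gamma i j hj)
  rwa [map_zero] at this

theorem pmk_inl_mul_arrow (n : ℕ) (v : QuiverVertex n) (a : QuiverArrow n) :
    pmk n (.inl v) * pmk n (.inr a) =
      if v = arrowSrc n a then pmk n (.inr a) else 0 := by
  split_ifs with hv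
  · rw [hv]; exact pmk_src_mul n a
  · rw [← pmk_src_mul n a, ← mul_assoc, pmk_mul_inl_ne n hv, zero_mul]

theorem arrow_mul_pmk_inl (n : ℕ) (a : QuiverArrow n) (v : QuiverVertex n) :
    pmk n (.inr a) * pmk n (.inl v) =
      if v = arrowTgt n a then pmk n (.inr a) else 0 := by
  split_ifs with hv
  · rw [hv]; exact pmk_mul_tgt n a
  · rw [← pmk_mul_tgt n a, mul_assoc, pmk_mul_inl_ne n (fun he => hv he.symm), mul_zero]

theorem genP_mul_idem_eq (n k : ℕ) (hk : k + 1 < 3 * (n - 1)) (v : QuiverVertex n)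
    (hv : v = vtxP n (ptAt n (k + 1) hk)) :
    genP n k * pmk n (.inl v) = genP n k := by
  obtain ⟨a, ha, -, htgt, -⟩ := genP_spec n k hk
  rw [ha, arrow_mul_pmk_inl, if_pos (htgt ▸ hv)]

theorem genP_mul_idem_ne (n k : ℕ) (hk : k + 1 < 3 * (n - 1)) (v : QuiverVertex n)
    (hv : ¬ v = vtxP n (ptAt n (k + 1) hk)) :
    genP n k * pmk n (.inl v) = 0 := by
  obtain ⟨a, ha, -, htgt, -⟩ := genP_spec n k hk
  rw [ha, arrow_mul_pmk_inl, if_neg (htgt ▸ hv)]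

theorem idem_mul_genP_eq (n k : ℕ) (hk : k + 1 < 3 * (n - 1)) (v : QuiverVertex n)
    (hv : v = vtxP n (ptAt n k (by omega))) :
    pmk n (.inl v) * genP n k = genP n k := by
  obtain ⟨a, ha, hsrc, -, -⟩ := genP_spec n k hk
  rw [ha, pmk_inl_mul_arrow, if_pos (hsrc ▸ hv)]

theorem idem_mul_genP_ne (n k : ℕ) (hk : k + 1 < 3 * (n - 1)) (v : QuiverVertex n)
    (hv : ¬ v = vtxP n (ptAt n k (by omega))) :
    pmk n (.inl v) * genP n k = 0 := by
  obtain ⟨a, ha, hsrc, -, -⟩ := genP_spec n k hk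
  rw [ha, pmk_inl_mul_arrow, if_neg (hsrc ▸ hv)]

theorem chainP_mul_idem_eq (n s l : ℕ) (hl : 1 ≤ l) (h : s + l < 3 * (n - 1))
    (v : QuiverVertex n) (hv : v = vtxP n (ptAt n (s + l) h)) :
    chainP n s l * pmk n (.inl v) = chainP n s l := by
  rcases l with - | l'
  · omega
  · show (chainP n s l' * genP n (s + l')) * _ = _
    rw [mul_assoc, genP_mul_idem_eq n (s + l') (by omega) v hv]
    rfl

theorem chainP_mul_idem_ne (n s l : ℕ) (hl : 1 ≤ l) (h : s + l < 3 * (n - 1))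
    (v : QuiverVertex n) (hv : ¬ v = vtxP n (ptAt n (s + l) h)) :
    chainP n s l * pmk n (.inl v) = 0 := by
  rcases l with - | l'
  · omega
  · show (chainP n s l' * genP n (s + l')) * _ = _
    rw [mul_assoc, genP_mul_idem_ne n (s + l') (by omega) v hv, mul_zero]

/-- The span of the images of the basis elements. -/
noncomputable def SP (n : ℕ) : Submodule (ZMod 2) (PathAlgQuot n) :=
  Submodule.span (ZMod 2) (Set.range (pathOf n))

theorem chainP_mem (n s l : ℕ) (hl : 1 ≤ l) (h : s + l < 3 * (n - 1)) :
    chainP n s l ∈ SP n := by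
  have h2 : s + l - s = l := by omega
  rw [← congrArg (chainP n s) h2, ← pathOf_chordAt n s (s + l) (by omega) h]
  exact Submodule.subset_span ⟨_, rfl⟩

theorem genP_mem (n k : ℕ) (hk : k + 1 < 3 * (n - 1)) : genP n k ∈ SP n := by
  rw [← chainP_one n k]
  exact chainP_mem n k 1 le_rfl (by omega)

theorem pathOf_idem_eq (n : ℕ) (v : QuiverVertex n) :
    pathOf n (.idem (vertexIdem n v)) = pmk n (.inl v) := by
  show pmk n (.inl (vtxM n (vertexIdem n v))) = _
  rw [vtxM_vertexIdem]

theorem one_mem_SP (n : ℕ) : (1 : PathAlgQuot n) ∈ SP n := by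
  rw [← pmk_sum_inl n]
  refine Submodule.sum_mem _ fun v _ => ?_
  rw [← pathOf_idem_eq n v]
  exact Submodule.subset_span ⟨_, rfl⟩

theorem arrow_genP (n : ℕ) (a : QuiverArrow n) :
    ∃ k, k + 1 < 3 * (n - 1) ∧ genP n k = pmk n (.inr a) := by
  cases a with
  | alpha i =>
    have hi := i.isLt
    refine ⟨3 * i.val, by omega, ?_⟩
    rw [genP_alpha n _ (by omega) (by omega)]
    refine congrArg (fun j => pmk n (.inr (QuiverArrow.alpha j))) (Fin.ext ?_)
    show 3 * i.val / 3 = i.val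
    omega
  | beta i =>
    have hi := i.isLt
    refine ⟨3 * i.val + 1, by omega, ?_⟩
    rw [genP_beta n _ (by omega) (by omega)]
    refine congrArg (fun j => pmk n (.inr (QuiverArrow.beta j))) (Fin.ext ?_)
    show (3 * i.val + 1) / 3 = i.val
    omega
  | gamma i =>
    have hi := i.isLt
    refine ⟨3 * i.val + 2, by omega, ?_⟩
    rw [genP_gamma n _ (by omega) (by omega)]
    refine congrArg (fun j => pmk n (.inr (QuiverArrow.gamma j))) (Fin.ext ?_)
    show (3 * i.val + 2) / 3 = i.val
    omega

end ArcDiagram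

namespace ArcDiagram

theorem chainP_mul_genP_mem (n s l : ℕ) (hl : 1 ≤ l) (h : s + l < 3 * (n - 1))
    (k : ℕ) (hk : k + 1 < 3 * (n - 1)) :
    chainP n s l * genP n k ∈ SP n := by
  by_cases hkt : k = s + l
  · subst hkt
    show chainP n s (l + 1) ∈ SP n
    exact chainP_mem n s (l + 1) (by omega) (by omega)
  · have hk3 : k < 3 * (n - 1) := by omega
    by_cases hw : vtxP n (ptAt n k hk3) = vtxP n (ptAt n (s + l) h)
    · -- same vertex but different positions: the product vanishes by the relations
      by_cases hm1 : k % 3 = 1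
      · rw [vtxP_ptAt_eq1 n k hk3 hm1] at hw
        by_cases hm2 : (s + l) % 3 = 1
        · rw [vtxP_ptAt_eq1 n (s + l) h hm2] at hw
          exfalso
          apply hkt
          have hq : k / 3 = (s + l) / 3 := congrArg Fin.val (Sum.inr.inj hw)
          omega
        · rw [vtxP_ptAt_ne1 n (s + l) h hm2] at hw
          exact absurd hw (by simp)
      · rw [vtxP_ptAt_ne1 n k hk3 hm1] at hw
        by_cases hm2 : (s + l) % 3 = 1
        · rw [vtxP_ptAt_eq1 n (s + l) h hm2] at hw
          exact absurd hw (by simp)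
        · rw [vtxP_ptAt_ne1 n (s + l) h hm2] at hw
          have hq : k / 3 = (s + l) / 3 := congrArg Fin.val (Sum.inl.inj hw)
          have hkt' : k ≠ s + l := hkt
          have hcase : (s + l) % 3 = 2 ∧ k % 3 = 0 ∨ (s + l) % 3 = 0 ∧ k % 3 = 2 := by
            omega
          rcases hcase with ⟨ht2, hk0⟩ | ⟨ht0, hk2⟩
          · rcases l with - | l'
            · omega
            · show chainP n s l' * genP n (s + l') * genP n k ∈ SP n
              rw [mul_assoc]
              have hb : genP n (s + l') =
                  pmk n (.inr (.beta ⟨(s + l') / 3, by omega⟩)) :=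
                genP_beta n _ (by omega) (by omega)
              have ha : genP n k =
                  pmk n (.inr (.alpha ⟨(s + l') / 3, by omega⟩)) := by
                rw [genP_alpha n k hk0 (by omega)]
                refine congrArg (fun j => pmk n (.inr (QuiverArrow.alpha j))) (Fin.ext ?_)
                show k / 3 = (s + l') / 3
                omega
              rw [hb, ha, pmk_beta_alpha, mul_zero]
              exact Submodule.zero_mem _
          · rcases l with - | l'
            · omega
            · show chainP n s l' * genP n (s + l') * genP n k ∈ SP n
              rw [mul_assoc]
              have hg1 : genP n (s + l') =
                  pmk n (.inr (.gamma ⟨(s + l') / 3, by omega⟩)) :=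
                genP_gamma n _ (by omega) (by omega)
              have hg2 : genP n k = pmk n (.inr (.gamma ⟨k / 3, by omega⟩)) :=
                genP_gamma n k hk2 (by omega)
              rw [hg1, hg2, pmk_gamma_gamma n _ _ (by show k / 3 = (s + l') / 3 + 1; omega),
                mul_zero]
              exact Submodule.zero_mem _
    · rw [← idem_mul_genP_eq n k hk _ rfl, ← mul_assoc,
        chainP_mul_idem_ne n s l hl h _ hw, zero_mul]
      exact Submodule.zero_mem _

theorem mul_pmk_mem (n : ℕ) (g : QuiverVertex n ⊕ QuiverArrow n) (x : PathAlgQuot n)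
    (hx : x ∈ SP n) : x * pmk n g ∈ SP n := by
  induction hx using Submodule.span_induction with
  | mem y hy =>
    obtain ⟨b, rfl⟩ := hy
    cases b with
    | idem m =>
      cases g with
      | inl v =>
        show pmk n (.inl (vtxM n m)) * pmk n (.inl v) ∈ SP n
        by_cases hv : vtxM n m = v
        · rw [hv, pmk_mul_inl_self]
          exact Submodule.subset_span ⟨.idem (vertexIdem n v), pathOf_idem_eq n v⟩
        · rw [pmk_mul_inl_ne n hv]
          exact Submodule.zero_mem _
      | inr a =>
        obtain ⟨k, hk, hgen⟩ := arrow_genP n a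
        show pmk n (.inl (vtxM n m)) * pmk n (.inr a) ∈ SP n
        rw [← hgen]
        by_cases hv : vtxM n m = vtxP n (ptAt n k (by omega))
        · rw [idem_mul_genP_eq n k hk _ hv]
          exact genP_mem n k hk
        · rw [idem_mul_genP_ne n k hk _ hv]
          exact Submodule.zero_mem _
    | chord c =>
      obtain ⟨s, t, hst, ht, rfl⟩ := chord_shape c
      rw [pathOf_chordAt n s t hst ht]
      cases g with
      | inl v =>
        by_cases hv : v = vtxP n (ptAt n (s + (t - s)) (by omega))
        · rw [chainP_mul_idem_eq n s (t - s) (by omega) (by omega) v hv]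
          exact chainP_mem n s (t - s) (by omega) (by omega)
        · rw [chainP_mul_idem_ne n s (t - s) (by omega) (by omega) v hv]
          exact Submodule.zero_mem _
      | inr a =>
        obtain ⟨k, hk, hgen⟩ := arrow_genP n a
        rw [← hgen]
        exact chainP_mul_genP_mem n s (t - s) (by omega) (by omega) k hk
  | zero =>
    rw [zero_mul]
    exact Submodule.zero_mem _
  | add y z hy hz ihy ihz =>
    rw [add_mul]
    exact Submodule.add_mem _ ihy ihz
  | smul r y hy ihy =>
    rw [smul_mul_assoc]
    exact Submodule.smul_mem _ r ihy

theorem SP_eq_top (n : ℕ) : SP n = ⊤ := by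
  rw [eq_top_iff]
  rintro x -
  obtain ⟨y, rfl⟩ := RingQuot.mkAlgHom_surjective (ZMod 2) (PathRel n) x
  have key : ∀ (y : FreeAlgebra (ZMod 2) (QuiverVertex n ⊕ QuiverArrow n))
      (x : PathAlgQuot n), x ∈ SP n →
      x * RingQuot.mkAlgHom (ZMod 2) (PathRel n) y ∈ SP n := by
    intro y
    induction y using FreeAlgebra.induction with
    | grade0 r =>
      intro x hx
      rw [AlgHom.commutes, Algebra.algebraMap_eq_smul_one, mul_smul_comm, mul_one]
      exact Submodule.smul_mem _ r hx
    | grade1 g =>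
      intro x hx
      exact mul_pmk_mem n g x hx
    | mul a b ha hb =>
      intro x hx
      rw [map_mul, ← mul_assoc]
      exact hb _ (ha _ hx)
    | add a b ha hb =>
      intro x hx
      rw [map_add, mul_add]
      exact Submodule.add_mem _ (ha _ hx) (hb _ hx)
  have h1 := key y 1 (one_mem_SP n)
  rwa [one_mul] at h1

end ArcDiagram

namespace ArcDiagram

/-- The inverse linear map, sending a basis element of `B(Z)` to the corresponding
element of the path-algebra quotient. -/
noncomputable def psiL (n : ℕ) : (sphereZ n).BAlg →ₗ[ZMod 2] PathAlgQuot n where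
  toFun x := ∑ b, x b • pathOf n b
  map_add' x y := by
    simp [add_smul, Finset.sum_add_distrib]
  map_smul' r x := by
    simp [Finset.smul_sum, smul_smul]

/-- The forward map as a linear map. -/
noncomputable def phiL (n : ℕ) : PathAlgQuot n →ₗ[ZMod 2] (sphereZ n).BAlg where
  toFun := phiA n
  map_add' := map_add (phiA n)
  map_smul' := map_smul (phiA n)

theorem phiL_psiL (n : ℕ) : (phiL n).comp (psiL n) = LinearMap.id := by
  refine LinearMap.ext fun x => ?_
  show phiA n (∑ b, x b • pathOf n b) = x
  rw [map_sum]
  have : ∀ b, phiA n (x b • pathOf n b) = x b • (sphereZ n).sngl b := fun b => by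
    rw [map_smul, phiA_pathOf]; rfl
  rw [Finset.sum_congr rfl fun b _ => this b]
  exact (sphereZ n).sum_sngl_smul x

theorem psiL_phiL (n : ℕ) : (psiL n).comp (phiL n) = LinearMap.id := by
  refine LinearMap.ext_on (SP_eq_top n) ?_
  rintro x ⟨b, rfl⟩
  show psiL n (phiA n (pathOf n b)) = pathOf n b
  rw [phiA_pathOf]
  show ∑ b', (sphereZ n).sngl b b' • pathOf n b' = pathOf n b
  rw [Finset.sum_congr rfl fun b' _ => by
    rw [show (sphereZ n).sngl b b' = if b' = b then 1 else 0 from rfl]]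
  simp [ite_smul]

end ArcDiagram
open ArcDiagram in
/-- For `n > 1`, the algebra `B(Z)` of the arc diagram of the
complement of `n` disks in `S²` is isomorphic, as a unital `𝔽₂`-algebra, to the
path algebra of the quiver with vertices `I₁, …, I_{n−1}, J₁, …, J_{n−1}` and
arrows `αᵢ : Iᵢ → Jᵢ`, `βᵢ : Jᵢ → Iᵢ`, `γᵢ : Iᵢ → I_{i+1}`, modulo the two-sided
ideal generated by `βᵢαᵢ` and `γᵢγ_{i+1}` (in diagrammatic order); the
isomorphism sends each vertex idempotent to the corresponding idempotent of
`B(Z)`, `αᵢ` to the chord `(aᵢ, bᵢ)`, `βᵢ` to the chord `(bᵢ, a′ᵢ)` and `γᵢ` to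
the chord `(a′ᵢ, a_{i+1})`. -/
theorem bAlg_sphere_pathAlgebra (n : ℕ) (hn : 1 < n) :
    ∃ Φ : PathAlgQuot n ≃ₗ[ZMod 2] (sphereZ n).BAlg,
      (∀ x y : PathAlgQuot n, Φ (x * y) = (sphereZ n).bmul (Φ x) (Φ y)) ∧
      Φ 1 = (sphereZ n).bone ∧
      (∀ v : QuiverVertex n,
        Φ (pmk n (Sum.inl v)) = (sphereZ n).sngl (.idem (vertexIdem n v))) ∧
      (∀ i : Fin (n - 1),
        Φ (pmk n (Sum.inr (.alpha i))) = (sphereZ n).sngl (.chord (chAB n i))) ∧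
      (∀ i : Fin (n - 1),
        Φ (pmk n (Sum.inr (.beta i))) = (sphereZ n).sngl (.chord (chBA' n i))) ∧
      (∀ i : Fin (n - 2),
        Φ (pmk n (Sum.inr (.gamma i))) = (sphereZ n).sngl (.chord (chA'A n i))) := by

  refine ⟨LinearEquiv.ofLinear (phiL n) (psiL n) (phiL_psiL n) (psiL_phiL n),
    ?_, ?_, ?_, ?_, ?_, ?_⟩
  · intro x y
    exact map_mul (phiA n) x y
  · exact map_one (phiA n)
  · intro v
    exact phiA_pmk n (Sum.inl v)
  · intro i
    exact phiA_pmk n (Sum.inr (.alpha i))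
  · intro i
    exact phiA_pmk n (Sum.inr (.beta i))
  · intro i
    exact phiA_pmk n (Sum.inr (.gamma i))
end

section
/- The product on the strands algebra A(n) is associative, and the element u = Σ_{S ⊆ {1,…,n}} (S, S, id_S) is a two-sided unit; hence A(n) is a finite-dimensional unital associative 𝔽₂-algebra. -/
/-- A strands diagram on `n` points `(S, T, φ)`, encoded by the graph of the
bijection `φ : S → T`: a finite set `g` of pairs `(i, φ i)`, such that each
strand has non-negative slope (`i ≤ φ i`) and the first (resp. second)
coordinates of distinct elements are distinct.  Here `S` (resp. `T`) is the set
of first (resp. second) coordinates of elements of `g`. -/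
structure StrandsDiagram (n : ℕ) where
  g : Finset (Fin n × Fin n)
  slope : ∀ p ∈ g, p.1 ≤ p.2
  inj : ∀ p ∈ g, ∀ q ∈ g, (p.1 = q.1 ↔ p.2 = q.2)

namespace StrandsDiagram

theorem ext' {n : ℕ} {a b : StrandsDiagram n} (h : a.g = b.g) : a = b := by
  cases a; cases b; cases h; rfl

instance (n : ℕ) : DecidableEq (StrandsDiagram n) := fun a b =>
  if h : a.g = b.g then .isTrue (ext' h) else .isFalse fun he => h (by cases he; rfl)

noncomputable instance (n : ℕ) : Fintype (StrandsDiagram n) :=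
  Fintype.ofInjective StrandsDiagram.g fun _ _ h => ext' h

/-- The set `S` of initial points of the strands. -/
def dom {n : ℕ} (a : StrandsDiagram n) : Finset (Fin n) := a.g.image Prod.fst

/-- The set `T` of terminal points of the strands. -/
def cod {n : ℕ} (a : StrandsDiagram n) : Finset (Fin n) := a.g.image Prod.snd

/-- The graph of the composition `ψ ∘ φ` of two partial bijections. -/
def compGraph {n : ℕ} (f h : Finset (Fin n × Fin n)) : Finset (Fin n × Fin n) :=
  ((f ×ˢ h).filter fun pq => pq.1.2 = pq.2.1).image fun pq => (pq.1.1, pq.2.2)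

/-- The number of inversions (crossings) of a strands diagram with graph `f`. -/
def invCount {n : ℕ} (f : Finset (Fin n × Fin n)) : ℕ :=
  ((f ×ˢ f).filter fun pq => pq.1.1 < pq.2.1 ∧ pq.2.2 < pq.1.2).card

/-- The underlying `𝔽₂`-vector space of the strands algebra `A(n)`, realized as
the space of `𝔽₂`-valued functions on the set of strands diagrams. -/
abbrev StrandsAlg (n : ℕ) := StrandsDiagram n → ZMod 2

/-- The basis vector of `A(n)` corresponding to a strands diagram. -/
def sd {n : ℕ} (a : StrandsDiagram n) : StrandsAlg n := fun b => if b = a then 1 else 0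

/-- The multiplication of the strands algebra `A(n)`: the product of basis
elements `(S, T, φ)·(T′, U, ψ)` is zero if `T ≠ T′`; if `T = T′` it is
`(S, U, ψ ∘ φ)` when `inv(ψ ∘ φ) = inv(φ) + inv(ψ)`, and zero otherwise. -/
noncomputable def smul' {n : ℕ} (x y : StrandsAlg n) : StrandsAlg n := fun c =>
  ∑ a : StrandsDiagram n, ∑ b : StrandsDiagram n,
    if cod a = dom b ∧ c.g = compGraph a.g b.g ∧
        invCount c.g = invCount a.g + invCount b.g then
      x a * y b
    else 0

/-- The element `u = ∑_S (S, S, id_S)` of `A(n)`: the indicator function of the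
strands diagrams all of whose strands are horizontal. -/
def sunit (n : ℕ) : StrandsAlg n := fun a => if ∀ p ∈ a.g, p.1 = p.2 then 1 else 0

/-- The graph obtained by resolving the crossing of the two strands `p` and `q`
(interchanging their terminal points). -/
def resGraph {n : ℕ} (f : Finset (Fin n × Fin n)) (p q : Fin n × Fin n) :
    Finset (Fin n × Fin n) :=
  insert (p.1, q.2) (insert (q.1, p.2) ((f.erase p).erase q))

/-- The coefficient of the strands diagram `c` in the differential of the strands
diagram `d`: the number (mod 2) of inversions (crossings) of `d` whose resolution
is `c` and decreases the number of inversions by exactly one (i.e. introduces no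
double crossing). -/
noncomputable def delCoeff {n : ℕ} (d c : StrandsDiagram n) : ZMod 2 :=
  (((d.g ×ˢ d.g).filter fun pq =>
      pq.1.1 < pq.2.1 ∧ pq.2.2 < pq.1.2 ∧
      resGraph d.g pq.1 pq.2 = c.g ∧
      invCount (resGraph d.g pq.1 pq.2) + 1 = invCount d.g).card : ZMod 2)

/-- The differential of the strands algebra `A(n)`: on a basis element it is the
sum of all resolutions of single crossings which decrease the number of
crossings by exactly one, extended `𝔽₂`-linearly. -/
noncomputable def sdel {n : ℕ} (x : StrandsAlg n) : StrandsAlg n := fun c =>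
  ∑ d : StrandsDiagram n, delCoeff d c * x d

variable {n : ℕ}

lemma mem_compGraph {f h : Finset (Fin n × Fin n)} {x : Fin n × Fin n} :
    x ∈ compGraph f h ↔ ∃ k, (x.1, k) ∈ f ∧ (k, x.2) ∈ h := by
  simp only [compGraph, Finset.mem_image, Finset.mem_filter, Finset.mem_product]
  constructor
  · rintro ⟨⟨p, q⟩, ⟨⟨hp, hq⟩, hpq⟩, rfl⟩
    dsimp only at hp hq hpq ⊢
    refine ⟨p.2, hp, ?_⟩
    rw [hpq]
    exact hq
  · rintro ⟨k, h1, h2⟩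
    exact ⟨((x.1, k), (k, x.2)), ⟨⟨h1, h2⟩, rfl⟩, rfl⟩

lemma compGraph_assoc (f g h : Finset (Fin n × Fin n)) :
    compGraph (compGraph f g) h = compGraph f (compGraph g h) := by
  ext x
  simp only [mem_compGraph]
  constructor
  · rintro ⟨k, ⟨m, hm1, hm2⟩, hkh⟩
    exact ⟨m, hm1, k, hm2, hkh⟩
  · rintro ⟨m, hm, k, hk1, hk2⟩
    exact ⟨k, ⟨m, hm, hk1⟩, hk2⟩

/-- The injectivity condition on a graph. -/
def Inj (f : Finset (Fin n × Fin n)) : Prop :=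
  ∀ p ∈ f, ∀ q ∈ f, (p.1 = q.1 ↔ p.2 = q.2)

lemma compGraph_inj {f g : Finset (Fin n × Fin n)} (hf : Inj f) (hg : Inj g) :
    Inj (compGraph f g) := by
  intro p hp q hq
  obtain ⟨k, hk1, hk2⟩ := mem_compGraph.1 hp
  obtain ⟨l, hl1, hl2⟩ := mem_compGraph.1 hq
  constructor
  · intro h
    exact (hg _ hk2 _ hl2).1 ((hf _ hk1 _ hl1).1 h)
  · intro h
    exact (hf _ hk1 _ hl1).2 ((hg _ hk2 _ hl2).2 h)

lemma compGraph_slope {f g : Finset (Fin n × Fin n)} (hf : ∀ p ∈ f, p.1 ≤ p.2)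
    (hg : ∀ p ∈ g, p.1 ≤ p.2) : ∀ p ∈ compGraph f g, p.1 ≤ p.2 := by
  intro p hp
  obtain ⟨k, hk1, hk2⟩ := mem_compGraph.1 hp
  exact le_trans (hf (p.1, k) hk1) (hg (k, p.2) hk2)

lemma image_fst_compGraph {f g : Finset (Fin n × Fin n)}
    (h : f.image Prod.snd = g.image Prod.fst) :
    (compGraph f g).image Prod.fst = f.image Prod.fst := by
  ext i
  simp only [Finset.mem_image]
  constructor
  · rintro ⟨x, hx, rfl⟩
    obtain ⟨k, h1, h2⟩ := mem_compGraph.1 hx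
    exact ⟨_, h1, rfl⟩
  · rintro ⟨p, hp, rfl⟩
    have hmem : p.2 ∈ g.image Prod.fst := h ▸ Finset.mem_image_of_mem _ hp
    obtain ⟨q, hq, hq2⟩ := Finset.mem_image.1 hmem
    refine ⟨(p.1, q.2), mem_compGraph.2 ⟨p.2, by simpa using hp, ?_⟩, rfl⟩
    simpa [← hq2] using hq

lemma image_snd_compGraph {f g : Finset (Fin n × Fin n)}
    (h : f.image Prod.snd = g.image Prod.fst) :
    (compGraph f g).image Prod.snd = g.image Prod.snd := by
  ext i
  simp only [Finset.mem_image]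
  constructor
  · rintro ⟨x, hx, rfl⟩
    obtain ⟨k, h1, h2⟩ := mem_compGraph.1 hx
    exact ⟨_, h2, rfl⟩
  · rintro ⟨q, hq, rfl⟩
    have hmem : q.1 ∈ f.image Prod.snd := h.symm ▸ Finset.mem_image_of_mem _ hq
    obtain ⟨p, hp, hp2⟩ := Finset.mem_image.1 hmem
    refine ⟨(p.1, q.2), mem_compGraph.2 ⟨q.1, ?_, by simpa using hq⟩, rfl⟩
    simpa [← hp2] using hp

lemma compGraph_of_horiz_left {f g : Finset (Fin n × Fin n)} (hf : ∀ p ∈ f, p.1 = p.2)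
    (h : f.image Prod.snd = g.image Prod.fst) : compGraph f g = g := by
  ext x
  rw [mem_compGraph]
  constructor
  · rintro ⟨k, h1, h2⟩
    have : x.1 = k := hf _ h1
    simpa [← this] using h2
  · intro hx
    have hmem : x.1 ∈ f.image Prod.snd := h.symm ▸ Finset.mem_image_of_mem _ hx
    obtain ⟨p, hp, hp2⟩ := Finset.mem_image.1 hmem
    have h1 : p.1 = p.2 := hf _ hp
    refine ⟨x.1, ?_, by simpa using hx⟩
    have : p = (x.1, x.1) := by rw [Prod.ext_iff]; exact ⟨h1.trans hp2, hp2⟩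
    rwa [this] at hp

lemma compGraph_of_horiz_right {f g : Finset (Fin n × Fin n)} (hg : ∀ p ∈ g, p.1 = p.2)
    (h : f.image Prod.snd = g.image Prod.fst) : compGraph f g = f := by
  ext x
  rw [mem_compGraph]
  constructor
  · rintro ⟨k, h1, h2⟩
    have : k = x.2 := hg _ h2
    simpa [this] using h1
  · intro hx
    have hmem : x.2 ∈ g.image Prod.fst := h ▸ Finset.mem_image_of_mem _ hx
    obtain ⟨q, hq, hq2⟩ := Finset.mem_image.1 hmem
    have h1 : q.1 = q.2 := hg _ hq
    refine ⟨x.2, by simpa using hx, ?_⟩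
    have : q = (x.2, x.2) := by rw [Prod.ext_iff]; exact ⟨hq2, h1.symm.trans hq2⟩
    rwa [this] at hq

lemma invCount_eq_zero {f : Finset (Fin n × Fin n)} (hf : ∀ p ∈ f, p.1 = p.2) :
    invCount f = 0 := by
  rw [invCount, Finset.card_eq_zero, Finset.filter_eq_empty_iff]
  rintro ⟨p, q⟩ hpq
  simp only [Finset.mem_product] at hpq
  rintro ⟨h1, h2⟩
  dsimp only at h1 h2
  rw [← hf _ hpq.1] at h2
  rw [hf _ hpq.2] at h1
  exact absurd (h1.trans h2) (lt_irrefl _)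

/-- A choice of midpoint witnessing membership in a composite graph. -/
noncomputable def mid (f g : Finset (Fin n × Fin n)) (x : Fin n × Fin n) : Fin n :=
  if h : ∃ k, (x.1, k) ∈ f ∧ (k, x.2) ∈ g then h.choose else x.1

lemma mid_spec {f g : Finset (Fin n × Fin n)} {x : Fin n × Fin n}
    (hx : x ∈ compGraph f g) : (x.1, mid f g x) ∈ f ∧ (mid f g x, x.2) ∈ g := by
  have h : ∃ k, (x.1, k) ∈ f ∧ (k, x.2) ∈ g := mem_compGraph.1 hx
  rw [mid, dif_pos h]
  exact h.choose_spec

lemma invCount_compGraph_le {f g : Finset (Fin n × Fin n)} (hf : Inj f) (hg : Inj g) :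
    invCount (compGraph f g) ≤ invCount f + invCount g := by
  classical
  have hc : Inj (compGraph f g) := compGraph_inj hf hg
  rw [invCount, invCount, invCount, ← Finset.card_disjSum]
  apply Finset.card_le_card_of_injOn
    (f := fun pq => if mid f g pq.2 < mid f g pq.1 then
      Sum.inl ((pq.1.1, mid f g pq.1), (pq.2.1, mid f g pq.2))
    else Sum.inr ((mid f g pq.1, pq.1.2), (mid f g pq.2, pq.2.2)))
  · intro pq hpq
    simp only [Finset.mem_coe, Finset.mem_filter, Finset.mem_product] at hpq
    obtain ⟨⟨hx, hy⟩, h1, h2⟩ := hpq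
    obtain ⟨hx1, hx2⟩ := mid_spec hx
    obtain ⟨hy1, hy2⟩ := mid_spec hy
    rw [Finset.mem_coe]; beta_reduce
    split_ifs with hlt
    · rw [Finset.inl_mem_disjSum, Finset.mem_filter, Finset.mem_product]
      exact ⟨⟨hx1, hy1⟩, h1, hlt⟩
    · rw [Finset.inr_mem_disjSum, Finset.mem_filter, Finset.mem_product]
      refine ⟨⟨hx2, hy2⟩, ?_, h2⟩
      rcases lt_trichotomy (mid f g pq.1) (mid f g pq.2) with h | h | h
      · exact h
      · exact absurd ((hf _ hx1 _ hy1).2 h) (ne_of_lt h1)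
      · exact absurd h hlt
  · intro pq hpq pq' hpq' heq
    simp only [Finset.mem_coe, Finset.mem_filter, Finset.mem_product] at hpq hpq'
    obtain ⟨⟨hx, hy⟩, -, -⟩ := hpq
    obtain ⟨⟨hx', hy'⟩, -, -⟩ := hpq'
    have key : pq.1.1 = pq'.1.1 ∧ pq.2.1 = pq'.2.1 ∨
        pq.1.2 = pq'.1.2 ∧ pq.2.2 = pq'.2.2 := by
      simp only at heq
      split_ifs at heq with h h'
      · have e := Sum.inl.inj heq
        exact Or.inl ⟨congrArg (fun s => s.1.1) e, congrArg (fun s => s.2.1) e⟩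
      · have e := Sum.inr.inj heq
        exact Or.inr ⟨congrArg (fun s => s.1.2) e, congrArg (fun s => s.2.2) e⟩
    have hext : pq.1 = pq'.1 ∧ pq.2 = pq'.2 := by
      rcases key with ⟨e1, e2⟩ | ⟨e1, e2⟩
      · exact ⟨Prod.ext e1 ((hc _ hx _ hx').1 e1), Prod.ext e2 ((hc _ hy _ hy').1 e2)⟩
      · exact ⟨Prod.ext ((hc _ hx _ hx').2 e1) e1, Prod.ext ((hc _ hy _ hy').2 e2) e2⟩
    exact Prod.ext hext.1 hext.2
/-- The identity strands diagram on a set `s` of points. -/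
def idDiag (s : Finset (Fin n)) : StrandsDiagram n where
  g := s.image fun i => (i, i)
  slope := by
    intro p hp
    obtain ⟨i, -, rfl⟩ := Finset.mem_image.1 hp
    exact le_refl _
  inj := by
    intro p hp q hq
    obtain ⟨i, -, rfl⟩ := Finset.mem_image.1 hp
    obtain ⟨j, -, rfl⟩ := Finset.mem_image.1 hq
    exact Iff.rfl

lemma idDiag_horiz (s : Finset (Fin n)) : ∀ p ∈ (idDiag s).g, p.1 = p.2 := by
  intro p hp
  obtain ⟨i, -, rfl⟩ := Finset.mem_image.1 hp
  rfl

lemma dom_idDiag (s : Finset (Fin n)) : dom (idDiag s) = s := by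
  ext i
  simp [dom, idDiag]

lemma cod_idDiag (s : Finset (Fin n)) : cod (idDiag s) = s := by
  ext i
  simp [cod, idDiag]

lemma horiz_eq_idDiag {a : StrandsDiagram n} (ha : ∀ p ∈ a.g, p.1 = p.2) :
    a = idDiag (dom a) := by
  apply ext'
  ext x
  rw [idDiag]
  simp only [Finset.mem_image]
  constructor
  · intro hx
    refine ⟨x.1, Finset.mem_image_of_mem _ hx, ?_⟩
    rw [Prod.ext_iff]
    exact ⟨rfl, ha _ hx⟩
  · rintro ⟨i, hi, rfl⟩
    obtain ⟨p, hp, hp1⟩ := Finset.mem_image.1 hi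
    have : p = (i, i) := by
      rw [Prod.ext_iff]
      exact ⟨hp1, (ha _ hp).symm.trans hp1⟩
    rwa [this] at hp

/-- The composition of two strands diagrams. -/
def comp (a b : StrandsDiagram n) : StrandsDiagram n where
  g := compGraph a.g b.g
  slope := compGraph_slope a.slope b.slope
  inj := compGraph_inj a.inj b.inj

/-- The condition for the product of two basis elements to be the third. -/
def Cnd (a b c : StrandsDiagram n) : Prop :=
  cod a = dom b ∧ c.g = compGraph a.g b.g ∧
    invCount c.g = invCount a.g + invCount b.g

lemma Cnd_unique {a b c c' : StrandsDiagram n} (h : Cnd a b c) (h' : Cnd a b c') : c = c' :=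
  ext' (h.2.1.trans h'.2.1.symm)

lemma cnd_chain {a b e c d : StrandsDiagram n} (h1 : Cnd a b c) (h2 : Cnd c e d) :
    Cnd b e (comp b e) ∧ Cnd a (comp b e) d := by
  obtain ⟨hab, hcg, hci⟩ := h1
  obtain ⟨hce, hdg, hdi⟩ := h2
  have hab' : a.g.image Prod.snd = b.g.image Prod.fst := hab
  have hbe : cod b = dom e := by
    have : cod c = cod b := by
      rw [cod, hcg, image_snd_compGraph hab']
      rfl
    rw [← this]
    exact hce
  have hbe' : b.g.image Prod.snd = e.g.image Prod.fst := hbe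
  have hdg' : d.g = compGraph a.g (comp b e).g := by
    rw [hdg, hcg, comp, compGraph_assoc]
  have hle1 : invCount d.g ≤ invCount a.g + invCount (comp b e).g := by
    rw [hdg']
    exact invCount_compGraph_le a.inj (comp b e).inj
  have hle2 : invCount (comp b e).g ≤ invCount b.g + invCount e.g :=
    invCount_compGraph_le b.inj e.inj
  have htot : invCount d.g = invCount a.g + invCount b.g + invCount e.g := by
    rw [hdi, hci]
  have he1 : invCount (comp b e).g = invCount b.g + invCount e.g := by omega
  have he2 : invCount d.g = invCount a.g + invCount (comp b e).g := by omega
  refine ⟨⟨hbe, rfl, he1⟩, ?_, hdg', he2⟩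
  show a.g.image Prod.snd = (comp b e).g.image Prod.fst
  rw [comp, image_fst_compGraph hbe']
  exact hab'

lemma cnd_chain' {a b e c d : StrandsDiagram n} (h1 : Cnd b e c) (h2 : Cnd a c d) :
    Cnd a b (comp a b) ∧ Cnd (comp a b) e d := by
  obtain ⟨hbe, hcg, hci⟩ := h1
  obtain ⟨hac, hdg, hdi⟩ := h2
  have hbe' : b.g.image Prod.snd = e.g.image Prod.fst := hbe
  have hab : cod a = dom b := by
    have : dom c = dom b := by
      rw [dom, hcg, image_fst_compGraph hbe']
      rfl
    rw [← this]
    exact hac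
  have hab' : a.g.image Prod.snd = b.g.image Prod.fst := hab
  have hdg' : d.g = compGraph (comp a b).g e.g := by
    rw [hdg, hcg, comp, compGraph_assoc]
  have hle1 : invCount d.g ≤ invCount (comp a b).g + invCount e.g := by
    rw [hdg']
    exact invCount_compGraph_le (comp a b).inj e.inj
  have hle2 : invCount (comp a b).g ≤ invCount a.g + invCount b.g :=
    invCount_compGraph_le a.inj b.inj
  have htot : invCount d.g = invCount a.g + (invCount b.g + invCount e.g) := by
    rw [hdi, hci]
  have he1 : invCount (comp a b).g = invCount a.g + invCount b.g := by omega
  have he2 : invCount d.g = invCount (comp a b).g + invCount e.g := by omega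
  refine ⟨⟨hab, rfl, he1⟩, ?_, hdg', he2⟩
  show (comp a b).g.image Prod.snd = e.g.image Prod.fst
  rw [comp, image_snd_compGraph hab']
  exact hbe'

lemma exists_middle_iff (a b e d : StrandsDiagram n) :
    (∃ c, Cnd a b c ∧ Cnd c e d) ↔ ∃ c, Cnd b e c ∧ Cnd a c d := by
  constructor
  · rintro ⟨c, h1, h2⟩
    exact ⟨comp b e, cnd_chain h1 h2⟩
  · rintro ⟨c, h1, h2⟩
    obtain ⟨g1, g2⟩ := cnd_chain' h1 h2
    exact ⟨comp a b, g1, g2⟩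

lemma sum_exists_eq {α : Type*} [Fintype α] (P : α → Prop) [DecidablePred P]
    (h : ∀ c c', P c → P c' → c = c') (w : ZMod 2) :
    (∑ c : α, if P c then w else 0) = if ∃ c, P c then w else 0 := by
  classical
  split_ifs with he
  · obtain ⟨c₀, hc₀⟩ := he
    rw [Finset.sum_eq_single c₀]
    · rw [if_pos hc₀]
    · intro b _ hb
      rw [if_neg fun hPb => hb (h b c₀ hPb hc₀)]
    · intro h'
      exact absurd (Finset.mem_univ c₀) h'
  · exact Finset.sum_eq_zero fun c _ => if_neg fun hc => he ⟨c, hc⟩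
instance (a b c : StrandsDiagram n) : Decidable (Cnd a b c) :=
  inferInstanceAs (Decidable (cod a = dom b ∧ c.g = compGraph a.g b.g ∧
    invCount c.g = invCount a.g + invCount b.g))

lemma smul'_apply (x y : StrandsAlg n) (c : StrandsDiagram n) :
    smul' x y c = ∑ a : StrandsDiagram n, ∑ b : StrandsDiagram n,
      if Cnd a b c then x a * y b else 0 :=
  Finset.sum_congr rfl fun _ _ => Finset.sum_congr rfl fun _ _ => if_congr Iff.rfl rfl rfl

lemma sum3_rotate {ι : Type*} [Fintype ι] (F : ι → ι → ι → ZMod 2) :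
    (∑ i : ι, ∑ j : ι, ∑ k : ι, F i j k) = ∑ j : ι, ∑ k : ι, ∑ i : ι, F i j k :=
  Finset.sum_comm.trans (Finset.sum_congr rfl fun _ _ => Finset.sum_comm)

lemma sum4_rotate {ι : Type*} [Fintype ι] (F : ι → ι → ι → ι → ZMod 2) :
    (∑ c : ι, ∑ e : ι, ∑ a : ι, ∑ b : ι, F c e a b) =
      ∑ e : ι, ∑ a : ι, ∑ b : ι, ∑ c : ι, F c e a b :=
  Finset.sum_comm.trans (Finset.sum_congr rfl fun e _ => sum3_rotate fun c a b => F c e a b)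

theorem smul'_assoc (x y z : StrandsAlg n) :
    smul' (smul' x y) z = smul' x (smul' y z) := by
  funext d
  have expandL : smul' (smul' x y) z d =
      ∑ e : StrandsDiagram n, ∑ a : StrandsDiagram n, ∑ b : StrandsDiagram n,
        ∑ c : StrandsDiagram n,
          if Cnd a b c ∧ Cnd c e d then x a * y b * z e else 0 := by
    calc smul' (smul' x y) z d
        = ∑ c : StrandsDiagram n, ∑ e : StrandsDiagram n,
            if Cnd c e d then
              (∑ a : StrandsDiagram n, ∑ b : StrandsDiagram n,
                if Cnd a b c then x a * y b else 0) * z e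
            else 0 := by
          rw [smul'_apply]
          exact Finset.sum_congr rfl fun c _ => Finset.sum_congr rfl fun e _ => by
            rw [smul'_apply]
      _ = ∑ c : StrandsDiagram n, ∑ e : StrandsDiagram n, ∑ a : StrandsDiagram n,
            ∑ b : StrandsDiagram n,
              if Cnd a b c ∧ Cnd c e d then x a * y b * z e else 0 := by
          refine Finset.sum_congr rfl fun c _ => Finset.sum_congr rfl fun e _ => ?_
          split_ifs with h
          · rw [Finset.sum_mul]
            refine Finset.sum_congr rfl fun a _ => ?_
            rw [Finset.sum_mul]
            refine Finset.sum_congr rfl fun b _ => ?_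
            split_ifs with h1 h2 h3
            · rfl
            · exact absurd ⟨h1, h⟩ h2
            · exact absurd h3.1 h1
            · rw [zero_mul]
          · rw [eq_comm]
            refine Finset.sum_eq_zero fun a _ => Finset.sum_eq_zero fun b _ => ?_
            exact if_neg fun hc => h hc.2
      _ = _ := sum4_rotate _
  have expandR : smul' x (smul' y z) d =
      ∑ a : StrandsDiagram n, ∑ b : StrandsDiagram n, ∑ e : StrandsDiagram n,
        ∑ c : StrandsDiagram n,
          if Cnd b e c ∧ Cnd a c d then x a * (y b * z e) else 0 := by
    calc smul' x (smul' y z) d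
        = ∑ a : StrandsDiagram n, ∑ c : StrandsDiagram n,
            if Cnd a c d then
              x a * (∑ b : StrandsDiagram n, ∑ e : StrandsDiagram n,
                if Cnd b e c then y b * z e else 0)
            else 0 := by
          rw [smul'_apply]
          exact Finset.sum_congr rfl fun a _ => Finset.sum_congr rfl fun c _ => by
            rw [smul'_apply]
      _ = ∑ a : StrandsDiagram n, ∑ c : StrandsDiagram n, ∑ b : StrandsDiagram n,
            ∑ e : StrandsDiagram n,
              if Cnd b e c ∧ Cnd a c d then x a * (y b * z e) else 0 := by
          refine Finset.sum_congr rfl fun a _ => Finset.sum_congr rfl fun c _ => ?_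
          split_ifs with h
          · rw [Finset.mul_sum]
            refine Finset.sum_congr rfl fun b _ => ?_
            rw [Finset.mul_sum]
            refine Finset.sum_congr rfl fun e _ => ?_
            split_ifs with h1 h2 h3
            · rfl
            · exact absurd ⟨h1, h⟩ h2
            · exact absurd h3.1 h1
            · rw [mul_zero]
          · rw [eq_comm]
            refine Finset.sum_eq_zero fun b _ => Finset.sum_eq_zero fun e _ => ?_
            exact if_neg fun hc => h hc.2
      _ = _ := Finset.sum_congr rfl fun a _ => sum3_rotate _
  rw [expandL, expandR, sum3_rotate]
  refine Finset.sum_congr rfl fun a _ => Finset.sum_congr rfl fun b _ =>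
    Finset.sum_congr rfl fun e _ => ?_
  rw [sum_exists_eq _ (fun c c' hc hc' => Cnd_unique hc.1 hc'.1) _,
    sum_exists_eq _ (fun c c' hc hc' => Cnd_unique hc.1 hc'.1) _]
  exact if_congr (exists_middle_iff a b e d) (mul_assoc _ _ _) rfl
lemma dom_eq_cod_of_horiz {a : StrandsDiagram n} (ha : ∀ p ∈ a.g, p.1 = p.2) :
    dom a = cod a := by
  ext i
  simp only [dom, cod, Finset.mem_image]
  constructor
  · rintro ⟨p, hp, rfl⟩
    exact ⟨p, hp, (ha _ hp).symm⟩
  · rintro ⟨p, hp, rfl⟩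
    exact ⟨p, hp, ha _ hp⟩

lemma cnd_horiz_left_iff (a b c : StrandsDiagram n) :
    (Cnd a b c ∧ ∀ p ∈ a.g, p.1 = p.2) ↔ a = idDiag (dom c) ∧ b = c := by
  constructor
  · rintro ⟨⟨hab, hcg, -⟩, ha⟩
    have hab' : a.g.image Prod.snd = b.g.image Prod.fst := hab
    have hbg : compGraph a.g b.g = b.g := compGraph_of_horiz_left ha hab'
    have hbc : b = c := ext' (hcg.trans hbg).symm
    refine ⟨?_, hbc⟩
    have h1 : a = idDiag (dom a) := horiz_eq_idDiag ha
    have h2 : dom a = dom c := by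
      rw [dom_eq_cod_of_horiz ha, hab, hbc]
    rwa [h2] at h1
  · rintro ⟨rfl, rfl⟩
    have hab' : (idDiag (dom b)).g.image Prod.snd = b.g.image Prod.fst := cod_idDiag (dom b)
    refine ⟨⟨?_, ?_, ?_⟩, idDiag_horiz _⟩
    · exact cod_idDiag (dom b)
    · rw [compGraph_of_horiz_left (idDiag_horiz _) hab']
    · rw [invCount_eq_zero (idDiag_horiz _), zero_add]

lemma cnd_horiz_right_iff (a b c : StrandsDiagram n) :
    (Cnd a b c ∧ ∀ p ∈ b.g, p.1 = p.2) ↔ a = c ∧ b = idDiag (cod c) := by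
  constructor
  · rintro ⟨⟨hab, hcg, -⟩, hb⟩
    have hab' : a.g.image Prod.snd = b.g.image Prod.fst := hab
    have hag : compGraph a.g b.g = a.g := compGraph_of_horiz_right hb hab'
    have hac : a = c := ext' (hcg.trans hag).symm
    refine ⟨hac, ?_⟩
    have h1 : b = idDiag (dom b) := horiz_eq_idDiag hb
    have h2 : dom b = cod c := by
      rw [← hab, hac]
    rwa [h2] at h1
  · rintro ⟨rfl, rfl⟩
    have hab' : a.g.image Prod.snd = (idDiag (cod a)).g.image Prod.fst :=
      (dom_idDiag (cod a)).symm
    refine ⟨⟨?_, ?_, ?_⟩, idDiag_horiz _⟩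
    · exact (dom_idDiag (cod a)).symm
    · rw [compGraph_of_horiz_right (idDiag_horiz _) hab']
    · rw [invCount_eq_zero (idDiag_horiz _), add_zero]

theorem smul'_unit_left (x : StrandsAlg n) : smul' (sunit n) x = x := by
  funext c
  rw [smul'_apply]
  calc (∑ a : StrandsDiagram n, ∑ b : StrandsDiagram n,
        if Cnd a b c then sunit n a * x b else 0)
      = ∑ a : StrandsDiagram n, ∑ b : StrandsDiagram n,
          if a = idDiag (dom c) ∧ b = c then x b else 0 := by
        refine Finset.sum_congr rfl fun a _ => Finset.sum_congr rfl fun b _ => ?_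
        rw [← if_congr (cnd_horiz_left_iff a b c) rfl rfl]
        rw [sunit]
        split_ifs with h1 h2 h3 h4 h5
        · rw [one_mul]
        · exact absurd ⟨h1, h2⟩ h3
        · exact absurd h4.2 h2
        · rw [zero_mul]
        · exact absurd h5.1 h1
        · rfl
    _ = x c := by
        simp [ite_and, Finset.sum_ite_eq, Finset.sum_ite_eq']
  
theorem smul'_unit_right (x : StrandsAlg n) : smul' x (sunit n) = x := by
  funext c
  rw [smul'_apply]
  calc (∑ a : StrandsDiagram n, ∑ b : StrandsDiagram n,
        if Cnd a b c then x a * sunit n b else 0)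
      = ∑ a : StrandsDiagram n, ∑ b : StrandsDiagram n,
          if a = c ∧ b = idDiag (cod c) then x a else 0 := by
        refine Finset.sum_congr rfl fun a _ => Finset.sum_congr rfl fun b _ => ?_
        rw [← if_congr (cnd_horiz_right_iff a b c) rfl rfl]
        rw [sunit]
        split_ifs with h1 h2 h3 h4 h5
        · rw [mul_one]
        · exact absurd ⟨h1, h2⟩ h3
        · exact absurd h4.2 h2
        · rw [mul_zero]
        · exact absurd h5.1 h1
        · rfl
    _ = x c := by
        simp [ite_and, Finset.sum_ite_eq, Finset.sum_ite_eq']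
end StrandsDiagram

open StrandsDiagram in
/-- The product on the strands algebra `A(n)` is associative
(and bilinear), and the element `u = ∑_S (S, S, id_S)` is a two-sided unit; hence
`A(n)` is a finite-dimensional unital associative `𝔽₂`-algebra. -/
theorem strandsAlg_assoc_unital (n : ℕ) :
    (∀ x y z : StrandsAlg n, smul' (smul' x y) z = smul' x (smul' y z)) ∧
    (∀ x : StrandsAlg n, smul' (sunit n) x = x ∧ smul' x (sunit n) = x) ∧
    (∀ x y z : StrandsAlg n, smul' (x + y) z = smul' x z + smul' y z ∧
      smul' x (y + z) = smul' x y + smul' x z) ∧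
    FiniteDimensional (ZMod 2) (StrandsAlg n) := by
  refine ⟨fun x y z => smul'_assoc x y z,
    fun x => ⟨smul'_unit_left x, smul'_unit_right x⟩, fun x y z => ⟨?_, ?_⟩, ?_⟩
  · funext c
    simp only [smul', Pi.add_apply, ← Finset.sum_add_distrib]
    refine Finset.sum_congr rfl fun a _ => Finset.sum_congr rfl fun b _ => ?_
    split_ifs <;> ring
  · funext c
    simp only [smul', Pi.add_apply, ← Finset.sum_add_distrib]
    refine Finset.sum_congr rfl fun a _ => Finset.sum_congr rfl fun b _ => ?_
    split_ifs <;> ring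
  · infer_instance
end

section
/- The differential ∂ on the strands algebra A(n) satisfies the Leibniz rule: ∂(a·b) = ∂(a)·b + a·∂(b) for all a, b ∈ A(n). -/
namespace SLB
open StrandsDiagram Finset

variable {n : ℕ}

/-- abbreviation for a strand -/
abbrev St (n : ℕ) := Fin n × Fin n

def Good (g : Finset (St n)) : Prop :=
  (∀ p ∈ g, p.1 ≤ p.2) ∧ ∀ p ∈ g, ∀ q ∈ g, (p.1 = q.1 ↔ p.2 = q.2)

def domG (g : Finset (St n)) : Finset (Fin n) := g.image Prod.fst
def codG (g : Finset (St n)) : Finset (Fin n) := g.image Prod.snd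

lemma dom_eq (a : StrandsDiagram n) : a.dom = domG a.g := rfl
lemma cod_eq (a : StrandsDiagram n) : a.cod = codG a.g := rfl

lemma good_of (a : StrandsDiagram n) : Good a.g := ⟨a.slope, a.inj⟩

lemma Good.fst_eq {g : Finset (St n)} (hg : Good g) {p q : St n}
    (hp : p ∈ g) (hq : q ∈ g) (h : p.1 = q.1) : p = q :=
  Prod.ext h ((hg.2 p hp q hq).mp h)

lemma Good.snd_eq {g : Finset (St n)} (hg : Good g) {p q : St n}
    (hp : p ∈ g) (hq : q ∈ g) (h : p.2 = q.2) : p = q :=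
  Prod.ext ((hg.2 p hp q hq).mpr h) h

lemma pe1 {a b : St n} (h : a = b) : a.1 = b.1 := by rw [h]
lemma pe2 {a b : St n} (h : a = b) : a.2 = b.2 := by rw [h]

lemma mem_compGraph {f h : Finset (St n)} {r : St n} :
    r ∈ compGraph f h ↔ ∃ j, (r.1, j) ∈ f ∧ (j, r.2) ∈ h := by
  constructor
  · intro hr
    simp only [compGraph, mem_image, mem_filter, mem_product] at hr
    obtain ⟨pq, ⟨⟨h1, h2⟩, h3⟩, h4⟩ := hr
    refine ⟨pq.1.2, ?_, ?_⟩
    · have : (r.1 = pq.1.1) := by rw [← h4]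
      rw [this]; exact h1
    · have : (r.2 = pq.2.2) := by rw [← h4]
      rw [this, h3]; exact h2
  · rintro ⟨j, h1, h2⟩
    simp only [compGraph, mem_image, mem_filter, mem_product]
    exact ⟨((r.1, j), (j, r.2)), ⟨⟨h1, h2⟩, rfl⟩, rfl⟩

lemma good_compGraph {f h : Finset (St n)} (hf : Good f) (hh : Good h) :
    Good (compGraph f h) := by
  constructor
  · rintro p hp
    rw [mem_compGraph] at hp
    obtain ⟨j, h1, h2⟩ := hp
    have a1 : p.1 ≤ j := hf.1 _ h1
    have a2 : j ≤ p.2 := hh.1 _ h2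
    exact le_trans a1 a2
  · rintro p hp q hq
    rw [mem_compGraph] at hp hq
    obtain ⟨j, hp1, hp2⟩ := hp
    obtain ⟨j', hq1, hq2⟩ := hq
    constructor
    · intro h1
      have hj : j = j' := by
        have h0 : ((p.1, j) : St n) = (q.1, j') := hf.fst_eq hp1 hq1 h1
        simpa using pe2 h0
      subst hj
      have h0 : ((j, p.2) : St n) = (j, q.2) := hh.fst_eq hp2 hq2 rfl
      simpa using pe2 h0
    · intro h2
      have hj : j = j' := by
        have h0 : ((j, p.2) : St n) = (j', q.2) := hh.snd_eq hp2 hq2 h2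
        simpa using pe1 h0
      subst hj
      have h0 : ((p.1, j) : St n) = (q.1, j) := hf.snd_eq hp1 hq1 rfl
      simpa using pe1 h0

/-- the diagram with a given good graph -/
def ofG (g : Finset (St n)) (hg : Good g) : StrandsDiagram n := ⟨g, hg.1, hg.2⟩

/-- pick the strand with given initial point -/
noncomputable def pick (g : Finset (St n)) (i : Fin n) : St n :=
  if hc : ∃ q ∈ g, q.1 = i then hc.choose else (i, i)

/-- pick the strand with given terminal point -/
noncomputable def pick2 (g : Finset (St n)) (j : Fin n) : St n :=
  if hc : ∃ q ∈ g, q.2 = j then hc.choose else (j, j)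

lemma pick_mem {g : Finset (St n)} {i : Fin n} (hi : i ∈ domG g) :
    pick g i ∈ g ∧ (pick g i).1 = i := by
  simp only [domG, mem_image] at hi
  obtain ⟨q, hq, hq1⟩ := hi
  have hc : ∃ q ∈ g, q.1 = i := ⟨q, hq, hq1⟩
  rw [pick, dif_pos hc]
  exact ⟨hc.choose_spec.1, hc.choose_spec.2⟩

lemma pick_eq {g : Finset (St n)} (hg : Good g) {q : St n} (hq : q ∈ g) :
    pick g q.1 = q := by
  have h1 : q.1 ∈ domG g := mem_image_of_mem _ hq
  obtain ⟨hm, hfst⟩ := pick_mem h1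
  exact hg.fst_eq hm hq hfst

lemma pick2_mem {g : Finset (St n)} {j : Fin n} (hj : j ∈ codG g) :
    pick2 g j ∈ g ∧ (pick2 g j).2 = j := by
  simp only [codG, mem_image] at hj
  obtain ⟨q, hq, hq1⟩ := hj
  have hc : ∃ q ∈ g, q.2 = j := ⟨q, hq, hq1⟩
  rw [pick2, dif_pos hc]
  exact ⟨hc.choose_spec.1, hc.choose_spec.2⟩

lemma pick2_eq {g : Finset (St n)} (hg : Good g) {q : St n} (hq : q ∈ g) :
    pick2 g q.2 = q := by
  have h1 : q.2 ∈ codG g := mem_image_of_mem _ hq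
  obtain ⟨hm, hsnd⟩ := pick2_mem h1
  exact hg.snd_eq hm hq hsnd

end SLB

namespace SLB
open StrandsDiagram Finset

variable {n : ℕ}

noncomputable def phi (h : Finset (St n)) (p : St n) : St n := (p.1, (pick h p.2).2)

lemma phi_spec {f h : Finset (St n)} (hh : Good h) (hcd : codG f = domG h)
    {p : St n} (hp : p ∈ f) : pick h p.2 ∈ h ∧ (pick h p.2).1 = p.2 := by
  have : p.2 ∈ domG h := by rw [← hcd]; exact mem_image_of_mem _ hp
  exact pick_mem this

lemma mem_comp_iff {f h : Finset (St n)} (hh : Good h) (hcd : codG f = domG h)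
    {r : St n} : r ∈ compGraph f h ↔ ∃ p ∈ f, r = phi h p := by
  rw [mem_compGraph]
  constructor
  · rintro ⟨j, h1, h2⟩
    refine ⟨(r.1, j), h1, ?_⟩
    have : pick h j = (j, r.2) := pick_eq hh h2
    simp [phi, this]
  · rintro ⟨p, hp, rfl⟩
    obtain ⟨hm, hfst⟩ := phi_spec hh hcd hp
    refine ⟨p.2, ?_, ?_⟩
    · simpa [phi] using hp
    · simp only [phi]
      have : pick h p.2 = (p.2, (pick h p.2).2) := Prod.ext hfst rfl
      rw [← this]; exact hm

lemma phi_mem {f h : Finset (St n)} (hh : Good h) (hcd : codG f = domG h)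
    {p : St n} (hp : p ∈ f) : phi h p ∈ compGraph f h :=
  (mem_comp_iff hh hcd).mpr ⟨p, hp, rfl⟩

lemma pick_phi {f h : Finset (St n)} (hf : Good f) (hh : Good h)
    (hcd : codG f = domG h) {P : St n} (hP : P ∈ compGraph f h) :
    pick f P.1 ∈ f ∧ phi h (pick f P.1) = P := by
  obtain ⟨p, hp, rfl⟩ := (mem_comp_iff hh hcd).mp hP
  have : pick f (phi h p).1 = p := pick_eq hf hp
  rw [this]
  exact ⟨hp, rfl⟩

lemma phi_snd_lt_iff {f h : Finset (St n)} (hh : Good h) (hcd : codG f = domG h)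
    {p q : St n} (hp : p ∈ f) (hq : q ∈ f) (hne : p.2 ≠ q.2) :
    (phi h p).2 ≠ (phi h q).2 := by
  intro he
  obtain ⟨hm1, hf1⟩ := phi_spec hh hcd hp
  obtain ⟨hm2, hf2⟩ := phi_spec hh hcd hq
  have : pick h p.2 = pick h q.2 := hh.snd_eq hm1 hm2 he
  exact hne (by rw [← hf1, ← hf2, this])

lemma mem_resGraph {f : Finset (St n)} {s t r : St n} :
    r ∈ resGraph f s t ↔ r = (s.1, t.2) ∨ r = (t.1, s.2) ∨ (r ∈ f ∧ r ≠ s ∧ r ≠ t) := by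
  simp only [resGraph, mem_insert, mem_erase]
  tauto

lemma domG_resGraph {f : Finset (St n)} {s t : St n} (hs : s ∈ f) (ht : t ∈ f) :
    domG (resGraph f s t) = domG f := by
  ext i
  simp only [domG, mem_image]
  constructor
  · rintro ⟨r, hr, rfl⟩
    rw [mem_resGraph] at hr
    rcases hr with rfl | rfl | ⟨hrf, _, _⟩
    · exact ⟨s, hs, rfl⟩
    · exact ⟨t, ht, rfl⟩
    · exact ⟨r, hrf, rfl⟩
  · rintro ⟨r, hr, rfl⟩
    by_cases h1 : r = s
    · subst h1; exact ⟨(r.1, t.2), by rw [mem_resGraph]; left; rfl, rfl⟩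
    by_cases h2 : r = t
    · subst h2; exact ⟨(r.1, s.2), by rw [mem_resGraph]; right; left; rfl, rfl⟩
    · exact ⟨r, by rw [mem_resGraph]; right; right; exact ⟨hr, h1, h2⟩, rfl⟩

lemma codG_resGraph {f : Finset (St n)} {s t : St n} (hs : s ∈ f) (ht : t ∈ f) :
    codG (resGraph f s t) = codG f := by
  ext i
  simp only [codG, mem_image]
  constructor
  · rintro ⟨r, hr, rfl⟩
    rw [mem_resGraph] at hr
    rcases hr with rfl | rfl | ⟨hrf, _, _⟩
    · exact ⟨t, ht, rfl⟩
    · exact ⟨s, hs, rfl⟩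
    · exact ⟨r, hrf, rfl⟩
  · rintro ⟨r, hr, rfl⟩
    by_cases h1 : r = s
    · subst h1; exact ⟨(t.1, r.2), by rw [mem_resGraph]; right; left; rfl, rfl⟩
    by_cases h2 : r = t
    · subst h2; exact ⟨(s.1, r.2), by rw [mem_resGraph]; left; rfl, rfl⟩
    · exact ⟨r, by rw [mem_resGraph]; right; right; exact ⟨hr, h1, h2⟩, rfl⟩

lemma resGraph_comm {f : Finset (St n)} {s t : St n} :
    resGraph f s t = resGraph f t s := by
  ext r
  rw [mem_resGraph, mem_resGraph]
  tauto

lemma good_resGraph {f : Finset (St n)} {s t : St n} (hg : Good f)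
    (hs : s ∈ f) (ht : t ∈ f) (hlt : s.1 < t.1) (hcf : t.2 < s.2) :
    Good (resGraph f s t) := by
  have hne : s ≠ t := fun he => absurd (pe1 he) (ne_of_lt hlt)
  constructor
  · intro p hp
    rw [mem_resGraph] at hp
    rcases hp with rfl | rfl | ⟨hpf, _, _⟩
    · exact le_trans (le_of_lt hlt) (hg.1 t ht)
    · exact le_trans (hg.1 t ht) (le_of_lt hcf)
    · exact hg.1 p hpf
  · intro p hp q hq
    rw [mem_resGraph] at hp hq
    have hst1 : s.1 ≠ t.1 := ne_of_lt hlt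
    have hst2 : s.2 ≠ t.2 := (ne_of_lt hcf).symm
    constructor
    · intro h
      rcases hp with rfl | rfl | ⟨hpf, hps, hpt⟩ <;>
        rcases hq with rfl | rfl | ⟨hqf, hqs, hqt⟩
      · rfl
      · exact absurd h hst1
      · exact absurd (pe2 (hg.fst_eq hs hqf h)).symm
          (fun he => hqs (hg.snd_eq hqf hs he))
      · exact absurd h.symm hst1
      · rfl
      · exact absurd (pe2 (hg.fst_eq ht hqf h)).symm
          (fun he => hqt (hg.snd_eq hqf ht he))
      · exact absurd (hg.fst_eq hpf hs h) hps
      · exact absurd (hg.fst_eq hpf ht h) hpt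
      · exact pe2 (hg.fst_eq hpf hqf h)
    · intro h
      rcases hp with rfl | rfl | ⟨hpf, hps, hpt⟩ <;>
        rcases hq with rfl | rfl | ⟨hqf, hqs, hqt⟩
      · rfl
      · exact absurd h hst2.symm
      · exact absurd (hg.snd_eq ht hqf h) (fun he => hqt he.symm)
      · exact absurd h.symm hst2.symm
      · rfl
      · exact absurd (hg.snd_eq hs hqf h) (fun he => hqs he.symm)
      · exact absurd (hg.snd_eq hpf ht h) hpt
      · exact absurd (hg.snd_eq hpf hs h) hps
      · exact pe1 (hg.snd_eq hpf hqf h)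

end SLB

namespace SLB
open StrandsDiagram Finset

variable {n : ℕ}

lemma compRes_left {f h : Finset (St n)} (hf : Good f) (hh : Good h)
    (hcd : codG f = domG h) {s t : St n} (hs : s ∈ f) (ht : t ∈ f) :
    compGraph (resGraph f s t) h = resGraph (compGraph f h) (phi h s) (phi h t) := by
  have hcd' : codG (resGraph f s t) = domG h := by rw [codG_resGraph hs ht]; exact hcd
  ext r
  rw [mem_comp_iff hh hcd', mem_resGraph]
  constructor
  · rintro ⟨p, hp, rfl⟩
    rw [mem_resGraph] at hp
    rcases hp with rfl | rfl | ⟨hpf, hps, hpt⟩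
    · left; rfl
    · right; left; rfl
    · right; right
      refine ⟨phi_mem hh hcd hpf, ?_, ?_⟩
      · intro he
        have he1 := pe1 he
        simp only [phi] at he1
        exact hps (hf.fst_eq hpf hs he1)
      · intro he
        have he1 := pe1 he
        simp only [phi] at he1
        exact hpt (hf.fst_eq hpf ht he1)
  · rintro (rfl | rfl | ⟨hrF, hr1, hr2⟩)
    · exact ⟨(s.1, t.2), by rw [mem_resGraph]; left; rfl, rfl⟩
    · exact ⟨(t.1, s.2), by rw [mem_resGraph]; right; left; rfl, rfl⟩
    · obtain ⟨p, hp, rfl⟩ := (mem_comp_iff hh hcd).mp hrF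
      refine ⟨p, ?_, rfl⟩
      rw [mem_resGraph]
      right; right
      exact ⟨hp, fun he => hr1 (by rw [he]), fun he => hr2 (by rw [he])⟩

lemma compRes_right {f h : Finset (St n)} (hf : Good f) (hh : Good h)
    (hcd : codG f = domG h) {u v : St n} (hu : u ∈ h) (hv : v ∈ h) :
    compGraph f (resGraph h u v) =
      resGraph (compGraph f h) (phi h (pick2 f u.1)) (phi h (pick2 f v.1)) := by
  have hu1 : u.1 ∈ codG f := by rw [hcd]; exact mem_image_of_mem _ hu
  have hv1 : v.1 ∈ codG f := by rw [hcd]; exact mem_image_of_mem _ hv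
  obtain ⟨hpf, hp2⟩ := pick2_mem hu1
  obtain ⟨hqf, hq2⟩ := pick2_mem hv1
  set p := pick2 f u.1 with hpdef
  set q := pick2 f v.1 with hqdef
  have hdp : p.2 ∈ domG h := by rw [← hcd]; exact mem_image_of_mem Prod.snd hpf
  have hdq : q.2 ∈ domG h := by rw [← hcd]; exact mem_image_of_mem Prod.snd hqf
  obtain ⟨hmp, hfp⟩ := pick_mem hdp
  obtain ⟨hmq, hfq⟩ := pick_mem hdq
  have hpu : pick h p.2 = u := hh.fst_eq hmp hu (by rw [hfp, hp2])
  have hqv : pick h q.2 = v := hh.fst_eq hmq hv (by rw [hfq, hq2])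
  have hphip : phi h p = (p.1, u.2) := by simp [phi, hpu]
  have hphiq : phi h q = (q.1, v.2) := by simp [phi, hqv]
  rw [hphip, hphiq]
  ext r
  rw [mem_compGraph, mem_resGraph]
  constructor
  · rintro ⟨j, hrj, hjr⟩
    rw [mem_resGraph] at hjr
    rcases hjr with hjr | hjr | ⟨hjh, hju, hjv⟩
    · obtain ⟨hj, hr2'⟩ : j = u.1 ∧ r.2 = v.2 := by
        rw [Prod.mk.injEq] at hjr; exact hjr
      have hje : (r.1, j) = p := hf.snd_eq hrj hpf (by rw [hj, hp2])
      left
      have h1' : r.1 = p.1 := by rw [← hje]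
      exact Prod.ext h1' hr2'
    · obtain ⟨hj, hr2'⟩ : j = v.1 ∧ r.2 = u.2 := by
        rw [Prod.mk.injEq] at hjr; exact hjr
      have hje : (r.1, j) = q := hf.snd_eq hrj hqf (by rw [hj, hq2])
      right; left
      have h1' : r.1 = q.1 := by rw [← hje]
      exact Prod.ext h1' hr2'
    · right; right
      refine ⟨mem_compGraph.mpr ⟨j, hrj, hjh⟩, ?_, ?_⟩
      · intro he
        have he1 : r.1 = p.1 := by rw [he]
        have : (r.1, j) = p := hf.fst_eq hrj hpf he1
        have hj : j = p.2 := by rw [← this]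
        have : (j, r.2) = u := hh.fst_eq hjh hu (by rw [hj, hp2])
        exact hju this
      · intro he
        have he1 : r.1 = q.1 := by rw [he]
        have : (r.1, j) = q := hf.fst_eq hrj hqf he1
        have hj : j = q.2 := by rw [← this]
        have : (j, r.2) = v := hh.fst_eq hjh hv (by rw [hj, hq2])
        exact hjv this
  · rintro (rfl | rfl | ⟨hrF, hr1, hr2⟩)
    · refine ⟨u.1, ?_, ?_⟩
      · have hpe : ((p.1, u.1) : St n) = p := Prod.ext rfl hp2.symm
        show ((p.1, u.1) : St n) ∈ f
        rw [hpe]; exact hpf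
      · rw [mem_resGraph]; left; rfl
    · refine ⟨v.1, ?_, ?_⟩
      · have hqe : ((q.1, v.1) : St n) = q := Prod.ext rfl hq2.symm
        show ((q.1, v.1) : St n) ∈ f
        rw [hqe]; exact hqf
      · rw [mem_resGraph]; right; left; rfl
    · obtain ⟨j, h1, h2⟩ := mem_compGraph.mp hrF
      refine ⟨j, h1, ?_⟩
      rw [mem_resGraph]
      right; right
      refine ⟨h2, ?_, ?_⟩
      · intro he
        apply hr1
        have hj : j = u.1 := by rw [← he]
        have hje : (r.1, j) = p := hf.snd_eq h1 hpf (by rw [hj, hp2])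
        have ha : r.1 = p.1 := by rw [← hje]
        have hb : r.2 = u.2 := by rw [← he]
        exact Prod.ext ha hb
      · intro he
        apply hr2
        have hj : j = v.1 := by rw [← he]
        have hje : (r.1, j) = q := hf.snd_eq h1 hqf (by rw [hj, hq2])
        have ha : r.1 = q.1 := by rw [← hje]
        have hb : r.2 = v.2 := by rw [← he]
        exact Prod.ext ha hb

end SLB

namespace SLB
open StrandsDiagram Finset

variable {n : ℕ}

/-- crossing count summand -/
def cc (a b : St n) : ℕ := if a.1 < b.1 ∧ b.2 < a.2 then 1 else 0

lemma invCount_eq_sum (g : Finset (St n)) :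
    invCount g = ∑ p ∈ g, ∑ q ∈ g, cc p q := by
  rw [invCount, Finset.card_filter, Finset.sum_product]
  rfl

lemma sum2_insert (a b : St n) (R : Finset (St n)) (ha : a ∉ insert b R) (hb : b ∉ R)
    (c : St n → St n → ℕ) :
    (∑ p ∈ insert a (insert b R), ∑ q ∈ insert a (insert b R), c p q)
      = c a a + c a b + c b a + c b b +
        (∑ r ∈ R, (c a r + c r a + c b r + c r b)) + ∑ p ∈ R, ∑ q ∈ R, c p q := by
  have key : ∀ p, ∑ q ∈ insert a (insert b R), c p q = c p a + c p b + ∑ q ∈ R, c p q := by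
    intro p
    rw [Finset.sum_insert ha, Finset.sum_insert hb]
    ring
  rw [Finset.sum_insert ha, Finset.sum_insert hb, key a, key b,
    Finset.sum_congr rfl (fun p _ => key p)]
  simp only [Finset.sum_add_distrib]
  ring

lemma key_ineq {i j k K l m : Fin n} (hij : i < j) (hkK : k < K)
    (hl1 : l ≠ i) (hl2 : l ≠ j) (hm1 : m ≠ k) (hm2 : m ≠ K) :
    ((if i < l ∧ m < k then 1 else 0) + (if l < i ∧ k < m then 1 else 0) +
      ((if j < l ∧ m < K then 1 else 0) + (if l < j ∧ K < m then 1 else 0)) : ℕ)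
    ≤ (if i < l ∧ m < K then 1 else 0) + (if l < i ∧ K < m then 1 else 0) +
      ((if j < l ∧ m < k then 1 else 0) + (if l < j ∧ k < m then 1 else 0)) := by
  have hij' : (i : ℕ) < j := hij
  have hkK' : (k : ℕ) < K := hkK
  have hl1' : (l : ℕ) ≠ i := by simpa [Fin.ext_iff] using hl1
  have hl2' : (l : ℕ) ≠ j := by simpa [Fin.ext_iff] using hl2
  have hm1' : (m : ℕ) ≠ k := by simpa [Fin.ext_iff] using hm1
  have hm2' : (m : ℕ) ≠ K := by simpa [Fin.ext_iff] using hm2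
  simp only [Fin.lt_def]
  split_ifs <;> omega

lemma f_decomp {f : Finset (St n)} {s t : St n} (hs : s ∈ f) (ht : t ∈ f) :
    f = insert s (insert t ((f.erase s).erase t)) := by
  ext r
  simp only [mem_insert, mem_erase]
  constructor
  · intro hr
    by_cases h1 : r = s
    · tauto
    by_cases h2 : r = t
    · tauto
    · tauto
  · rintro (rfl | rfl | ⟨h1, h2, h3⟩)
    · exact hs
    · exact ht
    · exact h3

lemma invCount_res_lt {f : Finset (St n)} {s t : St n} (hg : Good f)
    (hs : s ∈ f) (ht : t ∈ f) (hlt : s.1 < t.1) (hcf : t.2 < s.2) :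
    invCount (resGraph f s t) + 1 ≤ invCount f := by
  have hne : s ≠ t := fun he => absurd (pe1 he) (ne_of_lt hlt)
  set R' := (f.erase s).erase t with hR'
  have hR'mem : ∀ r, r ∈ R' ↔ r ∈ f ∧ r ≠ s ∧ r ≠ t := by
    intro r; simp only [hR', mem_erase]; tauto
  have hsn : s ∉ insert t R' := by
    simp only [mem_insert, hR'mem]
    rintro (he | ⟨-, h2, -⟩)
    · exact hne he
    · exact h2 rfl
  have htn : t ∉ R' := by
    rw [hR'mem]; rintro ⟨-, -, h⟩; exact h rfl
  have hs't' : ((s.1, t.2) : St n) ≠ (t.1, s.2) := fun he => absurd (pe1 he) (ne_of_lt hlt)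
  have hs'n : ((s.1, t.2) : St n) ∉ insert (t.1, s.2) R' := by
    simp only [mem_insert, hR'mem]
    rintro (he | ⟨hm, -, -⟩)
    · exact hs't' he
    · have he2 : ((s.1, t.2) : St n) = s := hg.fst_eq hm hs rfl
      have : t.2 = s.2 := by rw [← he2]
      exact (ne_of_lt hcf) this
  have ht'n : ((t.1, s.2) : St n) ∉ R' := by
    rw [hR'mem]
    rintro ⟨hm, -, -⟩
    have he2 : ((t.1, s.2) : St n) = t := hg.fst_eq hm ht rfl
    have : s.2 = t.2 := by rw [← he2]
    exact (ne_of_lt hcf) this.symm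
  have hfd : f = insert s (insert t R') := f_decomp hs ht
  have hres : resGraph f s t = insert (s.1, t.2) (insert (t.1, s.2) R') := rfl
  rw [invCount_eq_sum, invCount_eq_sum, hres]
  conv_rhs => rw [hfd]
  rw [sum2_insert _ _ _ hs'n ht'n, sum2_insert _ _ _ hsn htn]
  have e1 : cc ((s.1, t.2) : St n) (s.1, t.2) = 0 := by simp [cc]
  have e2 : cc ((s.1, t.2) : St n) (t.1, s.2) = 0 := by
    simp only [cc]; rw [if_neg]; rintro ⟨-, h2⟩; exact absurd h2 (not_lt.mpr (le_of_lt hcf))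
  have e3 : cc ((t.1, s.2) : St n) (s.1, t.2) = 0 := by
    simp only [cc]; rw [if_neg]; rintro ⟨h1, -⟩; exact absurd h1 (not_lt.mpr (le_of_lt hlt))
  have e4 : cc ((t.1, s.2) : St n) (t.1, s.2) = 0 := by simp [cc]
  have e5 : cc s s = 0 := by simp [cc]
  have e6 : cc s t = 1 := by simp only [cc]; rw [if_pos ⟨hlt, hcf⟩]
  have e7 : cc t s = 0 := by
    simp only [cc]; rw [if_neg]; rintro ⟨h1, -⟩; exact absurd h1 (not_lt.mpr (le_of_lt hlt))
  have e8 : cc t t = 0 := by simp [cc]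
  rw [e1, e2, e3, e4, e5, e6, e7, e8]
  have hsum : (∑ r ∈ R', (cc ((s.1, t.2) : St n) r + cc r (s.1, t.2) +
      cc ((t.1, s.2) : St n) r + cc r (t.1, s.2)))
      ≤ ∑ r ∈ R', (cc s r + cc r s + cc t r + cc r t) := by
    apply Finset.sum_le_sum
    intro r hr
    rw [hR'mem] at hr
    obtain ⟨hrf, hrs, hrt⟩ := hr
    have d1 : r.1 ≠ s.1 := fun he => hrs (hg.fst_eq hrf hs he)
    have d2 : r.1 ≠ t.1 := fun he => hrt (hg.fst_eq hrf ht he)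
    have d3 : r.2 ≠ t.2 := fun he => hrt (hg.snd_eq hrf ht he)
    have d4 : r.2 ≠ s.2 := fun he => hrs (hg.snd_eq hrf hs he)
    have := key_ineq (i := s.1) (j := t.1) (k := t.2) (K := s.2) (l := r.1) (m := r.2)
      hlt hcf d1 d2 d3 d4
    simp only [cc]
    omega
  omega

end SLB

namespace SLB
open StrandsDiagram Finset

variable {n : ℕ}

noncomputable def thmap (f h : Finset (St n)) (pq : St n × St n) :
    (St n × St n) ⊕ (St n × St n) :=
  if (pick f pq.2.1).2 < (pick f pq.1.1).2 then Sum.inl (pick f pq.1.1, pick f pq.2.1)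
  else Sum.inr (pick h (pick f pq.1.1).2, pick h (pick f pq.2.1).2)

lemma inv_comp_le {f h : Finset (St n)} (hf : Good f) (hh : Good h)
    (hcd : codG f = domG h) :
    invCount (compGraph f h) ≤ invCount f + invCount h := by
  classical
  set XT := ((f ×ˢ f).filter fun pq => pq.1.1 < pq.2.1 ∧ pq.2.2 < pq.1.2) with hXT
  set YT := ((h ×ˢ h).filter fun pq => pq.1.1 < pq.2.1 ∧ pq.2.2 < pq.1.2) with hYT
  have hcards : invCount f + invCount h = (XT.disjSum YT).card := by
    rw [Finset.card_disjSum]; rfl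
  rw [hcards, invCount]
  apply Finset.card_le_card_of_injOn (thmap f h)
  · -- maps into
    intro pq hpq
    rw [coe_filter, Set.mem_setOf_eq, mem_product] at hpq
    obtain ⟨⟨hP, hQ⟩, h1, h2⟩ := hpq
    obtain ⟨hpmem, hpe⟩ := pick_phi hf hh hcd hP
    obtain ⟨hqmem, hqe⟩ := pick_phi hf hh hcd hQ
    set p := pick f pq.1.1 with hp
    set q := pick f pq.2.1 with hq
    have hp1 : p.1 = pq.1.1 := by rw [← hpe]; rfl
    have hq1 : q.1 = pq.2.1 := by rw [← hqe]; rfl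
    have hp1q1 : p.1 < q.1 := by rw [hp1, hq1]; exact h1
    have hpne : p ≠ q := fun he => absurd (pe1 he) (ne_of_lt hp1q1)
    have hp2ne : p.2 ≠ q.2 := fun he => hpne (hf.snd_eq hpmem hqmem he)
    obtain ⟨hup, hufst⟩ := phi_spec hh hcd hpmem
    obtain ⟨huq, huqfst⟩ := phi_spec hh hcd hqmem
    have hphp2 : (pick h p.2).2 = pq.1.2 := by rw [← hpe]; rfl
    have hphq2 : (pick h q.2).2 = pq.2.2 := by rw [← hqe]; rfl
    rw [thmap]
    split_ifs with hcase
    · rw [Finset.mem_coe, Finset.inl_mem_disjSum, hXT, mem_filter, mem_product]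
      exact ⟨⟨hpmem, hqmem⟩, hp1q1, hcase⟩
    · rw [Finset.mem_coe, Finset.inr_mem_disjSum, hYT, mem_filter, mem_product]
      refine ⟨⟨hup, huq⟩, ?_, ?_⟩
      · rw [hufst, huqfst]
        exact lt_of_le_of_ne (le_of_not_gt hcase) hp2ne
      · rw [hphp2, hphq2]
        exact h2
  · -- injective
    intro pq hpq pq' hpq' heq
    rw [coe_filter] at hpq hpq'
    simp only [Set.mem_setOf_eq] at hpq hpq'
    rw [mem_product] at hpq hpq'
    obtain ⟨⟨hP, hQ⟩, -, -⟩ := hpq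
    obtain ⟨⟨hP', hQ'⟩, -, -⟩ := hpq'
    obtain ⟨hpmem, hpe⟩ := pick_phi hf hh hcd hP
    obtain ⟨hqmem, hqe⟩ := pick_phi hf hh hcd hQ
    obtain ⟨hpmem', hpe'⟩ := pick_phi hf hh hcd hP'
    obtain ⟨hqmem', hqe'⟩ := pick_phi hf hh hcd hQ'
    rw [thmap, thmap] at heq
    split_ifs at heq with hc1 hc2 hc2
    · -- both inl
      have h12 := Sum.inl.inj heq
      rw [Prod.mk.injEq] at h12
      obtain ⟨e1, e2⟩ := h12
      have : pq.1 = pq'.1 := by rw [← hpe, ← hpe', e1]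
      have h2' : pq.2 = pq'.2 := by rw [← hqe, ← hqe', e2]
      exact Prod.ext this h2'
    · -- both inr
      have h12 := Sum.inr.inj heq
      rw [Prod.mk.injEq] at h12
      obtain ⟨e1, e2⟩ := h12
      obtain ⟨hu1, hu1f⟩ := phi_spec hh hcd hpmem
      obtain ⟨hu1', hu1f'⟩ := phi_spec hh hcd hpmem'
      obtain ⟨hu2, hu2f⟩ := phi_spec hh hcd hqmem
      obtain ⟨hu2', hu2f'⟩ := phi_spec hh hcd hqmem'
      have hsnd1 : (pick f pq.1.1).2 = (pick f pq'.1.1).2 := by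
        rw [← hu1f, ← hu1f', e1]
      have hsnd2 : (pick f pq.2.1).2 = (pick f pq'.2.1).2 := by
        rw [← hu2f, ← hu2f', e2]
      have e1' : pick f pq.1.1 = pick f pq'.1.1 := hf.snd_eq hpmem hpmem' hsnd1
      have e2' : pick f pq.2.1 = pick f pq'.2.1 := hf.snd_eq hqmem hqmem' hsnd2
      have : pq.1 = pq'.1 := by rw [← hpe, ← hpe', e1']
      have h2' : pq.2 = pq'.2 := by rw [← hqe, ← hqe', e2']
      exact Prod.ext this h2'

end SLB

namespace SLB
open StrandsDiagram Finset

variable {n : ℕ}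

lemma phi_fst (h : Finset (St n)) (p : St n) : (phi h p).1 = p.1 := rfl
lemma phi_snd (h : Finset (St n)) (p : St n) : (phi h p).2 = (pick h p.2).2 := rfl

lemma phi_pick2 {f h : Finset (St n)} (hf : Good f) (hh : Good h)
    (hcd : codG f = domG h) {u : St n} (hu : u ∈ h) :
    pick2 f u.1 ∈ f ∧ (pick2 f u.1).2 = u.1 ∧ phi h (pick2 f u.1) = ((pick2 f u.1).1, u.2) := by
  have hu1 : u.1 ∈ codG f := by rw [hcd]; exact mem_image_of_mem _ hu
  obtain ⟨hpf, hp2⟩ := pick2_mem hu1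
  have hdp : (pick2 f u.1).2 ∈ domG h := by rw [← hcd]; exact mem_image_of_mem Prod.snd hpf
  obtain ⟨hmp, hfp⟩ := pick_mem hdp
  have hpu : pick h (pick2 f u.1).2 = u := hh.fst_eq hmp hu (by rw [hfp, hp2])
  exact ⟨hpf, hp2, by simp [phi, hpu]⟩

section Central

/-- KA-type predicate -/
abbrev PA (f h cg : Finset (St n)) (pq : St n × St n) : Prop :=
  (pq.1.1 < pq.2.1 ∧ pq.2.2 < pq.1.2) ∧
    cg = compGraph (resGraph f pq.1 pq.2) h ∧
    invCount (compGraph (resGraph f pq.1 pq.2) h) + 1 = invCount f + invCount h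

abbrev PB (f h cg : Finset (St n)) (uv : St n × St n) : Prop :=
  (uv.1.1 < uv.2.1 ∧ uv.2.2 < uv.1.2) ∧
    cg = compGraph f (resGraph h uv.1 uv.2) ∧
    invCount (compGraph f (resGraph h uv.1 uv.2)) + 1 = invCount f + invCount h

abbrev PI (f h cg : Finset (St n)) (PQ : St n × St n) : Prop :=
  (PQ.1.1 < PQ.2.1 ∧ PQ.2.2 < PQ.1.2) ∧
    resGraph (compGraph f h) PQ.1 PQ.2 = cg ∧
    invCount (resGraph (compGraph f h) PQ.1 PQ.2) + 1 = invCount f + invCount h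

noncomputable abbrev cF (h : Finset (St n)) (pq : St n × St n) : Prop :=
  (pick h pq.2.2).2 < (pick h pq.1.2).2

noncomputable abbrev cfI (f : Finset (St n)) (PQ : St n × St n) : Prop :=
  (pick f PQ.2.1).2 < (pick f PQ.1.1).2

noncomputable abbrev cfB (f : Finset (St n)) (uv : St n × St n) : Prop :=
  (pick2 f uv.2.1).1 < (pick2 f uv.1.1).1

lemma bij1 {f h : Finset (St n)} (hf : Good f) (hh : Good h)
    (hcd : codG f = domG h) (cg : Finset (St n)) :
    ((f ×ˢ f).filter fun x => PA f h cg x ∧ cF h x).card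
      = ((compGraph f h ×ˢ compGraph f h).filter fun x => PI f h cg x ∧ cfI f x).card := by
  classical
  apply Finset.card_bij' (fun pq _ => (phi h pq.1, phi h pq.2))
    (fun PQ _ => (pick f PQ.1.1, pick f PQ.2.1))
  · -- maps forward
    intro pq hpq
    rw [mem_filter, mem_product] at hpq
    obtain ⟨⟨hsf, htf⟩, ⟨⟨hlt, hsn⟩, hgr, hinv⟩, hcF⟩ := hpq
    rw [mem_filter, mem_product]
    have hres : compGraph (resGraph f pq.1 pq.2) h
        = resGraph (compGraph f h) (phi h pq.1) (phi h pq.2) :=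
      compRes_left hf hh hcd hsf htf
    refine ⟨⟨phi_mem hh hcd hsf, phi_mem hh hcd htf⟩, ⟨⟨hlt, hcF⟩, ?_, ?_⟩, ?_⟩
    · rw [← hres]; exact hgr.symm
    · rw [← hres]; exact hinv
    · show (pick f (phi h pq.2).1).2 < (pick f (phi h pq.1).1).2
      rw [phi_fst, phi_fst, pick_eq hf hsf, pick_eq hf htf]
      exact hsn
  · -- maps backward
    intro PQ hPQ
    rw [mem_filter, mem_product] at hPQ
    obtain ⟨⟨hPF, hQF⟩, ⟨⟨hlt, hsn⟩, hgr, hinv⟩, hcfI⟩ := hPQ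
    obtain ⟨hsf, hse⟩ := pick_phi hf hh hcd hPF
    obtain ⟨htf, hte⟩ := pick_phi hf hh hcd hQF
    rw [mem_filter, mem_product]
    have hres : compGraph (resGraph f (pick f PQ.1.1) (pick f PQ.2.1)) h
        = resGraph (compGraph f h) (phi h (pick f PQ.1.1)) (phi h (pick f PQ.2.1)) :=
      compRes_left hf hh hcd hsf htf
    rw [hse, hte] at hres
    refine ⟨⟨hsf, htf⟩, ⟨⟨?_, hcfI⟩, ?_, ?_⟩, ?_⟩
    · show (pick f PQ.1.1).1 < (pick f PQ.2.1).1
      have a1 : (pick f PQ.1.1).1 = PQ.1.1 := by have := pe1 hse; exact this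
      have a2 : (pick f PQ.2.1).1 = PQ.2.1 := by have := pe1 hte; exact this
      rw [a1, a2]; exact hlt
    · rw [hres]; exact hgr.symm
    · rw [hres]; exact hinv
    · show (pick h (pick f PQ.2.1).2).2 < (pick h (pick f PQ.1.1).2).2
      have e1 : (pick h (pick f PQ.1.1).2).2 = PQ.1.2 := by have := pe2 hse; exact this
      have e2 : (pick h (pick f PQ.2.1).2).2 = PQ.2.2 := by have := pe2 hte; exact this
      rw [e1, e2]; exact hsn
  · -- left inverse
    intro pq hpq
    rw [mem_filter, mem_product] at hpq
    obtain ⟨⟨hsf, htf⟩, -⟩ := hpq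
    show (pick f (phi h pq.1).1, pick f (phi h pq.2).1) = pq
    rw [phi_fst, phi_fst, pick_eq hf hsf, pick_eq hf htf]
  · -- right inverse
    intro PQ hPQ
    rw [mem_filter, mem_product] at hPQ
    obtain ⟨⟨hPF, hQF⟩, -⟩ := hPQ
    obtain ⟨hsf, hse⟩ := pick_phi hf hh hcd hPF
    obtain ⟨htf, hte⟩ := pick_phi hf hh hcd hQF
    show (phi h (pick f PQ.1.1), phi h (pick f PQ.2.1)) = PQ
    rw [hse, hte]

end Central
end SLB

namespace SLB
open StrandsDiagram Finset

variable {n : ℕ}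

lemma bij2 {f h : Finset (St n)} (hf : Good f) (hh : Good h)
    (hcd : codG f = domG h) (cg : Finset (St n)) :
    ((h ×ˢ h).filter fun x => PB f h cg x ∧ ¬ cfB f x).card
      = ((compGraph f h ×ˢ compGraph f h).filter fun x => PI f h cg x ∧ ¬ cfI f x).card := by
  classical
  apply Finset.card_bij' (fun uv _ => (phi h (pick2 f uv.1.1), phi h (pick2 f uv.2.1)))
    (fun PQ _ => (pick h (pick f PQ.1.1).2, pick h (pick f PQ.2.1).2))
  · -- forward membership
    intro uv huv
    rw [mem_filter, mem_product] at huv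
    obtain ⟨⟨hu, hv⟩, ⟨⟨hlt, hsn⟩, hgr, hinv⟩, hncfB⟩ := huv
    obtain ⟨hpf, hp2, hphip⟩ := phi_pick2 hf hh hcd hu
    obtain ⟨hqf, hq2, hphiq⟩ := phi_pick2 hf hh hcd hv
    have hres := compRes_right hf hh hcd hu hv
    rw [mem_filter, mem_product]
    have hpq : pick2 f uv.1.1 ≠ pick2 f uv.2.1 := by
      intro he
      have : (pick2 f uv.1.1).2 = (pick2 f uv.2.1).2 := by rw [he]
      rw [hp2, hq2] at this
      exact (ne_of_lt hlt) this
    have hpq1 : (pick2 f uv.1.1).1 ≠ (pick2 f uv.2.1).1 := fun he => hpq (hf.fst_eq hpf hqf he)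
    refine ⟨⟨phi_mem hh hcd hpf, phi_mem hh hcd hqf⟩, ⟨⟨?_, ?_⟩, ?_, ?_⟩, ?_⟩
    · show (phi h (pick2 f uv.1.1)).1 < (phi h (pick2 f uv.2.1)).1
      rw [phi_fst, phi_fst]
      exact lt_of_le_of_ne (not_lt.mp hncfB) hpq1
    · show (phi h (pick2 f uv.2.1)).2 < (phi h (pick2 f uv.1.1)).2
      rw [hphip, hphiq]
      exact hsn
    · rw [← hres]; exact hgr.symm
    · rw [← hres]; exact hinv
    · show ¬ ((pick f (phi h (pick2 f uv.2.1)).1).2 < (pick f (phi h (pick2 f uv.1.1)).1).2)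
      rw [phi_fst, phi_fst, pick_eq hf hpf, pick_eq hf hqf, hp2, hq2]
      exact lt_asymm hlt
  · -- backward membership
    intro PQ hPQ
    rw [mem_filter, mem_product] at hPQ
    obtain ⟨⟨hPF, hQF⟩, ⟨⟨hlt, hsn⟩, hgr, hinv⟩, hncfI⟩ := hPQ
    obtain ⟨hsf, hse⟩ := pick_phi hf hh hcd hPF
    obtain ⟨htf, hte⟩ := pick_phi hf hh hcd hQF
    obtain ⟨hu, hufst⟩ := phi_spec hh hcd hsf
    obtain ⟨hv, hvfst⟩ := phi_spec hh hcd htf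
    rw [mem_filter, mem_product]
    have hst : pick f PQ.1.1 ≠ pick f PQ.2.1 := by
      intro he
      have a1 : (pick f PQ.1.1).1 = PQ.1.1 := by have := pe1 hse; exact this
      have a2 : (pick f PQ.2.1).1 = PQ.2.1 := by have := pe1 hte; exact this
      rw [← a1, ← a2, he] at hlt
      exact lt_irrefl _ hlt
    have hst2 : (pick f PQ.1.1).2 ≠ (pick f PQ.2.1).2 := fun he => hst (hf.snd_eq hsf htf he)
    have hres := compRes_right hf hh hcd hu hv
    rw [hufst, hvfst, pick2_eq hf hsf, pick2_eq hf htf, hse, hte] at hres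
    refine ⟨⟨hu, hv⟩, ⟨⟨?_, ?_⟩, ?_, ?_⟩, ?_⟩
    · show (pick h (pick f PQ.1.1).2).1 < (pick h (pick f PQ.2.1).2).1
      rw [hufst, hvfst]
      exact lt_of_le_of_ne (not_lt.mp hncfI) hst2
    · show (pick h (pick f PQ.2.1).2).2 < (pick h (pick f PQ.1.1).2).2
      have e1 : (pick h (pick f PQ.1.1).2).2 = PQ.1.2 := by have := pe2 hse; exact this
      have e2 : (pick h (pick f PQ.2.1).2).2 = PQ.2.2 := by have := pe2 hte; exact this
      rw [e1, e2]; exact hsn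
    · rw [hres]; exact hgr.symm
    · rw [hres]; exact hinv
    · show ¬ ((pick2 f (pick h (pick f PQ.2.1).2).1).1 < (pick2 f (pick h (pick f PQ.1.1).2).1).1)
      rw [hufst, hvfst, pick2_eq hf hsf, pick2_eq hf htf]
      have a1 : (pick f PQ.1.1).1 = PQ.1.1 := by have := pe1 hse; exact this
      have a2 : (pick f PQ.2.1).1 = PQ.2.1 := by have := pe1 hte; exact this
      rw [a1, a2]
      exact lt_asymm hlt
  · -- left inverse
    intro uv huv
    rw [mem_filter, mem_product] at huv
    obtain ⟨⟨hu, hv⟩, -⟩ := huv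
    obtain ⟨hpf, hp2, hphip⟩ := phi_pick2 hf hh hcd hu
    obtain ⟨hqf, hq2, hphiq⟩ := phi_pick2 hf hh hcd hv
    show (pick h (pick f (phi h (pick2 f uv.1.1)).1).2, pick h (pick f (phi h (pick2 f uv.2.1)).1).2) = uv
    rw [phi_fst, phi_fst, pick_eq hf hpf, pick_eq hf hqf, hp2, hq2,
      pick_eq hh hu, pick_eq hh hv]
  · -- right inverse
    intro PQ hPQ
    rw [mem_filter, mem_product] at hPQ
    obtain ⟨⟨hPF, hQF⟩, -⟩ := hPQ
    obtain ⟨hsf, hse⟩ := pick_phi hf hh hcd hPF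
    obtain ⟨htf, hte⟩ := pick_phi hf hh hcd hQF
    obtain ⟨hu, hufst⟩ := phi_spec hh hcd hsf
    obtain ⟨hv, hvfst⟩ := phi_spec hh hcd htf
    show (phi h (pick2 f (pick h (pick f PQ.1.1).2).1), phi h (pick2 f (pick h (pick f PQ.2.1).2).1)) = PQ
    rw [hufst, hvfst, pick2_eq hf hsf, pick2_eq hf htf, hse, hte]

lemma bij3 {f h : Finset (St n)} (hf : Good f) (hh : Good h)
    (hcd : codG f = domG h) (cg : Finset (St n)) :
    ((f ×ˢ f).filter fun x => PA f h cg x ∧ ¬ cF h x).card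
      = ((h ×ˢ h).filter fun x => PB f h cg x ∧ cfB f x).card := by
  classical
  apply Finset.card_bij' (fun pq _ => (pick h pq.2.2, pick h pq.1.2))
    (fun uv _ => (pick2 f uv.2.1, pick2 f uv.1.1))
  · -- forward membership
    intro pq hpq
    rw [mem_filter, mem_product] at hpq
    obtain ⟨⟨hsf, htf⟩, ⟨⟨hlt, hsn⟩, hgr, hinv⟩, hncF⟩ := hpq
    obtain ⟨hu, hufst⟩ := phi_spec hh hcd htf
    obtain ⟨hv, hvfst⟩ := phi_spec hh hcd hsf
    have hres := compRes_right hf hh hcd hu hv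
    rw [hufst, hvfst, pick2_eq hf htf, pick2_eq hf hsf] at hres
    have hresA : compGraph (resGraph f pq.1 pq.2) h
        = resGraph (compGraph f h) (phi h pq.2) (phi h pq.1) := by
      rw [resGraph_comm (f := f) (s := pq.1) (t := pq.2)]
      exact compRes_left hf hh hcd htf hsf
    have hkey : compGraph f (resGraph h (pick h pq.2.2) (pick h pq.1.2))
        = compGraph (resGraph f pq.1 pq.2) h := hres.trans hresA.symm
    rw [mem_filter, mem_product]
    have hne2 : pq.1.2 ≠ pq.2.2 := (ne_of_lt hsn).symm
    have hpicks : (pick h pq.1.2).2 ≠ (pick h pq.2.2).2 :=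
      phi_snd_lt_iff hh hcd hsf htf hne2
    refine ⟨⟨hu, hv⟩, ⟨⟨?_, ?_⟩, ?_, ?_⟩, ?_⟩
    · show (pick h pq.2.2).1 < (pick h pq.1.2).1
      rw [hufst, hvfst]; exact hsn
    · show (pick h pq.1.2).2 < (pick h pq.2.2).2
      exact lt_of_le_of_ne (not_lt.mp hncF) hpicks
    · rw [hkey]; exact hgr
    · rw [hkey]; exact hinv
    · show (pick2 f (pick h pq.1.2).1).1 < (pick2 f (pick h pq.2.2).1).1
      rw [hufst, hvfst, pick2_eq hf htf, pick2_eq hf hsf]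
      exact hlt
  · -- backward membership
    intro uv huv
    rw [mem_filter, mem_product] at huv
    obtain ⟨⟨hu, hv⟩, ⟨⟨hlt, hsn⟩, hgr, hinv⟩, hcfB⟩ := huv
    obtain ⟨hpf, hp2, hphip⟩ := phi_pick2 hf hh hcd hu
    obtain ⟨hqf, hq2, hphiq⟩ := phi_pick2 hf hh hcd hv
    have hres := compRes_right hf hh hcd hu hv
    rw [mem_filter, mem_product]
    have hres2 := compRes_left hf hh hcd hqf hpf
    rw [resGraph_comm (f := compGraph f h) (s := phi h (pick2 f uv.2.1))
      (t := phi h (pick2 f uv.1.1))] at hres2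
    refine ⟨⟨hqf, hpf⟩, ⟨⟨hcfB, ?_⟩, ?_, ?_⟩, ?_⟩
    · show (pick2 f uv.1.1).2 < (pick2 f uv.2.1).2
      rw [hp2, hq2]; exact hlt
    · rw [hres2, ← hres]; exact hgr
    · rw [hres2, ← hres]; exact hinv
    · show ¬ ((pick h (pick2 f uv.1.1).2).2 < (pick h (pick2 f uv.2.1).2).2)
      rw [hp2, hq2, pick_eq hh hu, pick_eq hh hv]
      exact lt_asymm hsn
  · -- left inverse
    intro pq hpq
    rw [mem_filter, mem_product] at hpq
    obtain ⟨⟨hsf, htf⟩, -⟩ := hpq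
    obtain ⟨hu, hufst⟩ := phi_spec hh hcd htf
    obtain ⟨hv, hvfst⟩ := phi_spec hh hcd hsf
    show (pick2 f (pick h pq.1.2).1, pick2 f (pick h pq.2.2).1) = pq
    rw [hufst, hvfst, pick2_eq hf htf, pick2_eq hf hsf]
  · -- right inverse
    intro uv huv
    rw [mem_filter, mem_product] at huv
    obtain ⟨⟨hu, hv⟩, -⟩ := huv
    obtain ⟨hpf, hp2, hphip⟩ := phi_pick2 hf hh hcd hu
    obtain ⟨hqf, hq2, hphiq⟩ := phi_pick2 hf hh hcd hv
    show (pick h (pick2 f uv.1.1).2, pick h (pick2 f uv.2.1).2) = uv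
    rw [hp2, hq2, pick_eq hh hu, pick_eq hh hv]

end SLB

namespace SLB
open StrandsDiagram Finset

variable {n : ℕ}

lemma filter_split {α : Type*} (s : Finset α) (p q : α → Prop)
    [DecidablePred p] [DecidablePred q] :
    (s.filter p).card
      = (s.filter fun x => p x ∧ q x).card + (s.filter fun x => p x ∧ ¬ q x).card := by
  have h := Finset.card_filter_add_card_filter_not (s := s.filter p) (p := q)
  rw [Finset.filter_filter, Finset.filter_filter] at h
  omega

lemma splitA {f h : Finset (St n)} (cg : Finset (St n)) :
    ((f ×ˢ f).filter (PA f h cg)).card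
      = ((f ×ˢ f).filter fun x => PA f h cg x ∧ cF h x).card
        + ((f ×ˢ f).filter fun x => PA f h cg x ∧ ¬ cF h x).card :=
  filter_split _ _ _

lemma splitB {f h : Finset (St n)} (cg : Finset (St n)) :
    ((h ×ˢ h).filter (PB f h cg)).card
      = ((h ×ˢ h).filter fun x => PB f h cg x ∧ cfB f x).card
        + ((h ×ˢ h).filter fun x => PB f h cg x ∧ ¬ cfB f x).card :=
  filter_split _ _ _

lemma splitI {f h : Finset (St n)} (cg : Finset (St n)) :
    ((compGraph f h ×ˢ compGraph f h).filter (PI f h cg)).card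
      = ((compGraph f h ×ˢ compGraph f h).filter fun x => PI f h cg x ∧ cfI f x).card
        + ((compGraph f h ×ˢ compGraph f h).filter fun x => PI f h cg x ∧ ¬ cfI f x).card :=
  filter_split _ _ _

lemma central {f h : Finset (St n)} (hf : Good f) (hh : Good h)
    (hcd : codG f = domG h) (cg : Finset (St n)) :
    ((f ×ˢ f).filter (PA f h cg)).card + ((h ×ˢ h).filter (PB f h cg)).card
      = ((compGraph f h ×ˢ compGraph f h).filter (PI f h cg)).card
        + 2 * ((f ×ˢ f).filter fun x => PA f h cg x ∧ ¬ cF h x).card := by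
  rw [splitA cg, splitB cg, splitI cg,
    bij1 hf hh hcd cg, bij2 hf hh hcd cg, bij3 hf hh hcd cg]
  omega

end SLB

namespace SLB
open StrandsDiagram Finset

variable {n : ℕ}

lemma JA_eq_PA {f h : Finset (St n)} (hf : Good f) (hh : Good h)
    (hcd : codG f = domG h) (cg : Finset (St n)) :
    ((f ×ˢ f).filter fun pq => (pq.1.1 < pq.2.1 ∧ pq.2.2 < pq.1.2) ∧
        invCount (resGraph f pq.1 pq.2) + 1 = invCount f ∧
        codG (resGraph f pq.1 pq.2) = domG h ∧
        cg = compGraph (resGraph f pq.1 pq.2) h ∧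
        invCount cg = invCount (resGraph f pq.1 pq.2) + invCount h)
      = (f ×ˢ f).filter (PA f h cg) := by
  apply Finset.filter_congr
  intro pq hpq
  rw [mem_product] at hpq
  obtain ⟨h1, h2⟩ := hpq
  constructor
  · rintro ⟨hcr, hres1, hcodG, hgr, hadd⟩
    refine ⟨hcr, hgr, ?_⟩
    rw [← hgr]
    omega
  · rintro ⟨hcr, hgr, hNval⟩
    have hgood := good_resGraph hf h1 h2 hcr.1 hcr.2
    have hb := invCount_res_lt hf h1 h2 hcr.1 hcr.2
    have hcod' : codG (resGraph f pq.1 pq.2) = domG h := by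
      rw [codG_resGraph h1 h2]; exact hcd
    have ha := inv_comp_le hgood hh hcod'
    refine ⟨hcr, by omega, hcod', hgr, by rw [hgr]; omega⟩

lemma JB_eq_PB {f h : Finset (St n)} (hf : Good f) (hh : Good h)
    (hcd : codG f = domG h) (cg : Finset (St n)) :
    ((h ×ˢ h).filter fun uv => (uv.1.1 < uv.2.1 ∧ uv.2.2 < uv.1.2) ∧
        invCount (resGraph h uv.1 uv.2) + 1 = invCount h ∧
        codG f = domG (resGraph h uv.1 uv.2) ∧
        cg = compGraph f (resGraph h uv.1 uv.2) ∧
        invCount cg = invCount f + invCount (resGraph h uv.1 uv.2))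
      = (h ×ˢ h).filter (PB f h cg) := by
  apply Finset.filter_congr
  intro uv huv
  rw [mem_product] at huv
  obtain ⟨h1, h2⟩ := huv
  constructor
  · rintro ⟨hcr, hres1, hcodG, hgr, hadd⟩
    refine ⟨hcr, hgr, ?_⟩
    rw [← hgr]
    omega
  · rintro ⟨hcr, hgr, hNval⟩
    have hgood := good_resGraph hh h1 h2 hcr.1 hcr.2
    have hb := invCount_res_lt hh h1 h2 hcr.1 hcr.2
    have hcod' : codG f = domG (resGraph h uv.1 uv.2) := by
      rw [domG_resGraph h1 h2]; exact hcd
    have ha := inv_comp_le hf hgood hcod'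
    refine ⟨hcr, by omega, hcod', hgr, by rw [hgr]; omega⟩

lemma JI_eq_PI {f h : Finset (St n)} (hf : Good f) (hh : Good h)
    (hcd : codG f = domG h) (cg : Finset (St n))
    (hN : invCount (compGraph f h) = invCount f + invCount h) :
    ((compGraph f h ×ˢ compGraph f h).filter fun pq =>
        pq.1.1 < pq.2.1 ∧ pq.2.2 < pq.1.2 ∧
        resGraph (compGraph f h) pq.1 pq.2 = cg ∧
        invCount (resGraph (compGraph f h) pq.1 pq.2) + 1 = invCount (compGraph f h))
      = (compGraph f h ×ˢ compGraph f h).filter (PI f h cg) := by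
  apply Finset.filter_congr
  intro pq hpq
  constructor
  · rintro ⟨hc1, hc2, hgr, hinv⟩
    exact ⟨⟨hc1, hc2⟩, hgr, by omega⟩
  · rintro ⟨⟨hc1, hc2⟩, hgr, hinv⟩
    exact ⟨hc1, hc2, hgr, by omega⟩

lemma PI_empty {f h : Finset (St n)} (hf : Good f) (hh : Good h)
    (hcd : codG f = domG h) (cg : Finset (St n))
    (hN : invCount (compGraph f h) ≠ invCount f + invCount h) :
    ((compGraph f h ×ˢ compGraph f h).filter (PI f h cg)) = ∅ := by
  rw [Finset.filter_eq_empty_iff]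
  intro pq hpq
  rw [mem_product] at hpq
  obtain ⟨h1, h2⟩ := hpq
  rintro ⟨⟨hc1, hc2⟩, hgr, hinv⟩
  have hgF := good_compGraph hf hh
  have hb := invCount_res_lt hgF h1 h2 hc1 hc2
  have ha := inv_comp_le hf hh hcd
  omega

end SLB

namespace SLB
open StrandsDiagram Finset

variable {n : ℕ}

lemma ite_ite' {c d : Prop} [Decidable c] [Decidable d] (x : ZMod 2) :
    (if c then (if d then x else 0) else 0) = if d ∧ c then x else 0 := by
  by_cases hc : c <;> by_cases hd : d <;> simp [hc, hd]

lemma ite_sum {c : Prop} [Decidable c] {β : Type*} (s : Finset β) (f : β → ZMod 2) :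
    (if c then ∑ x ∈ s, f x else 0) = ∑ x ∈ s, if c then f x else 0 := by
  split_ifs with hcc
  · rfl
  · simp

lemma card_filter_cast {β : Type*} (s : Finset β) (p : β → Prop) [DecidablePred p] :
    ((s.filter p).card : ZMod 2) = ∑ x ∈ s, if p x then (1 : ZMod 2) else 0 := by
  rw [Finset.card_filter, Nat.cast_sum]
  simp

lemma delCoeff_eq_sum (d c : StrandsDiagram n) :
    delCoeff d c = ∑ pq ∈ d.g ×ˢ d.g,
      if pq.1.1 < pq.2.1 ∧ pq.2.2 < pq.1.2 ∧ resGraph d.g pq.1 pq.2 = c.g ∧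
          invCount (resGraph d.g pq.1 pq.2) + 1 = invCount d.g then (1 : ZMod 2) else 0 := by
  rw [delCoeff, card_filter_cast]

noncomputable def compSD (A B : StrandsDiagram n) : StrandsDiagram n :=
  ofG (compGraph A.g B.g) (good_compGraph (good_of A) (good_of B))

lemma sum_collapse (G : Finset (St n)) (hG : Good G) (P : Finset (St n) → Prop)
    [∀ g, Decidable (P g)] :
    (∑ p : StrandsDiagram n, if G = p.g ∧ P p.g then (1 : ZMod 2) else 0)
      = if P G then 1 else 0 := by
  rw [Finset.sum_eq_single_of_mem (ofG G hG) (mem_univ _)]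
  · apply if_congr _ rfl rfl
    constructor
    · rintro ⟨-, hP⟩; exact hP
    · intro hP; exact ⟨rfl, hP⟩
  · intro d _ hne
    rw [if_neg]
    rintro ⟨hg, -⟩
    exact hne (ext' hg.symm)

lemma T0_eq (A B c : StrandsDiagram n) :
    (∑ d : StrandsDiagram n, if cod A = dom B ∧ d.g = compGraph A.g B.g ∧
        invCount d.g = invCount A.g + invCount B.g then delCoeff d c else 0)
    = if cod A = dom B ∧ invCount (compGraph A.g B.g) = invCount A.g + invCount B.g
      then delCoeff (compSD A B) c else 0 := by
  rw [Finset.sum_eq_single_of_mem (compSD A B) (mem_univ _)]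
  · apply if_congr _ rfl rfl
    constructor
    · rintro ⟨hc, -, hi⟩; exact ⟨hc, hi⟩
    · rintro ⟨hc, hi⟩; exact ⟨hc, rfl, hi⟩
  · intro d _ hne
    rw [if_neg]
    rintro ⟨-, hg, -⟩
    exact hne (ext' hg)

lemma T1_eq (A B c : StrandsDiagram n) :
    (∑ p : StrandsDiagram n, if cod p = dom B ∧ c.g = compGraph p.g B.g ∧
        invCount c.g = invCount p.g + invCount B.g then delCoeff A p else 0)
    = (((A.g ×ˢ A.g).filter fun pq => (pq.1.1 < pq.2.1 ∧ pq.2.2 < pq.1.2) ∧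
        invCount (resGraph A.g pq.1 pq.2) + 1 = invCount A.g ∧
        codG (resGraph A.g pq.1 pq.2) = domG B.g ∧
        c.g = compGraph (resGraph A.g pq.1 pq.2) B.g ∧
        invCount c.g = invCount (resGraph A.g pq.1 pq.2) + invCount B.g).card : ZMod 2) := by
  have step1 : ∀ p : StrandsDiagram n,
      (if cod p = dom B ∧ c.g = compGraph p.g B.g ∧
          invCount c.g = invCount p.g + invCount B.g then delCoeff A p else 0)
      = ∑ pq ∈ A.g ×ˢ A.g,
          if (pq.1.1 < pq.2.1 ∧ pq.2.2 < pq.1.2 ∧ resGraph A.g pq.1 pq.2 = p.g ∧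
              invCount (resGraph A.g pq.1 pq.2) + 1 = invCount A.g) ∧
            (cod p = dom B ∧ c.g = compGraph p.g B.g ∧
              invCount c.g = invCount p.g + invCount B.g) then (1 : ZMod 2) else 0 := by
    intro p
    rw [delCoeff_eq_sum, ite_sum]
    exact Finset.sum_congr rfl fun pq _ => ite_ite' _
  rw [Finset.sum_congr rfl fun p _ => step1 p, Finset.sum_comm, card_filter_cast]
  refine Finset.sum_congr rfl fun pq hpq => ?_
  rw [mem_product] at hpq
  by_cases hcr : pq.1.1 < pq.2.1 ∧ pq.2.2 < pq.1.2
  · have hgood : Good (resGraph A.g pq.1 pq.2) :=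
      good_resGraph (good_of A) hpq.1 hpq.2 hcr.1 hcr.2
    have hiff : ∀ p : StrandsDiagram n,
        ((pq.1.1 < pq.2.1 ∧ pq.2.2 < pq.1.2 ∧ resGraph A.g pq.1 pq.2 = p.g ∧
            invCount (resGraph A.g pq.1 pq.2) + 1 = invCount A.g) ∧
          (cod p = dom B ∧ c.g = compGraph p.g B.g ∧
            invCount c.g = invCount p.g + invCount B.g))
        ↔ (resGraph A.g pq.1 pq.2 = p.g ∧
            (invCount p.g + 1 = invCount A.g ∧ codG p.g = domG B.g ∧
              c.g = compGraph p.g B.g ∧ invCount c.g = invCount p.g + invCount B.g)) := by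
      intro p
      constructor
      · rintro ⟨⟨-, -, hG, hc4⟩, hcnd1, hcnd2, hcnd3⟩
        refine ⟨hG, ?_, hcnd1, hcnd2, hcnd3⟩
        rw [← hG]; exact hc4
      · rintro ⟨hG, hP1, hP2, hP3, hP4⟩
        refine ⟨⟨hcr.1, hcr.2, hG, ?_⟩, hP2, hP3, hP4⟩
        rw [hG]; exact hP1
    have hcoll' : (∑ p : StrandsDiagram n,
        if resGraph A.g pq.1 pq.2 = p.g ∧
            (invCount p.g + 1 = invCount A.g ∧ codG p.g = domG B.g ∧
              c.g = compGraph p.g B.g ∧ invCount c.g = invCount p.g + invCount B.g)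
          then (1 : ZMod 2) else 0)
        = if invCount (resGraph A.g pq.1 pq.2) + 1 = invCount A.g ∧
            codG (resGraph A.g pq.1 pq.2) = domG B.g ∧
            c.g = compGraph (resGraph A.g pq.1 pq.2) B.g ∧
            invCount c.g = invCount (resGraph A.g pq.1 pq.2) + invCount B.g
          then 1 else 0 :=
      sum_collapse (resGraph A.g pq.1 pq.2) hgood
        (fun g => invCount g + 1 = invCount A.g ∧ codG g = domG B.g ∧
          c.g = compGraph g B.g ∧ invCount c.g = invCount g + invCount B.g)
    rw [Finset.sum_congr rfl fun p _ => if_congr (hiff p) rfl rfl, hcoll']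
    apply if_congr _ rfl rfl
    constructor
    · intro hP; exact ⟨hcr, hP⟩
    · rintro ⟨-, hP⟩; exact hP
  · rw [Finset.sum_eq_zero, if_neg]
    · rintro ⟨hcrr, -⟩; exact hcr hcrr
    · intro p _
      rw [if_neg]
      rintro ⟨⟨hc1, hc2, -⟩, -⟩
      exact hcr ⟨hc1, hc2⟩

lemma T2_eq (A B c : StrandsDiagram n) :
    (∑ q : StrandsDiagram n, if cod A = dom q ∧ c.g = compGraph A.g q.g ∧
        invCount c.g = invCount A.g + invCount q.g then delCoeff B q else 0)
    = (((B.g ×ˢ B.g).filter fun uv => (uv.1.1 < uv.2.1 ∧ uv.2.2 < uv.1.2) ∧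
        invCount (resGraph B.g uv.1 uv.2) + 1 = invCount B.g ∧
        codG A.g = domG (resGraph B.g uv.1 uv.2) ∧
        c.g = compGraph A.g (resGraph B.g uv.1 uv.2) ∧
        invCount c.g = invCount A.g + invCount (resGraph B.g uv.1 uv.2)).card : ZMod 2) := by
  have step1 : ∀ q : StrandsDiagram n,
      (if cod A = dom q ∧ c.g = compGraph A.g q.g ∧
          invCount c.g = invCount A.g + invCount q.g then delCoeff B q else 0)
      = ∑ uv ∈ B.g ×ˢ B.g,
          if (uv.1.1 < uv.2.1 ∧ uv.2.2 < uv.1.2 ∧ resGraph B.g uv.1 uv.2 = q.g ∧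
              invCount (resGraph B.g uv.1 uv.2) + 1 = invCount B.g) ∧
            (cod A = dom q ∧ c.g = compGraph A.g q.g ∧
              invCount c.g = invCount A.g + invCount q.g) then (1 : ZMod 2) else 0 := by
    intro q
    rw [delCoeff_eq_sum, ite_sum]
    exact Finset.sum_congr rfl fun uv _ => ite_ite' _
  rw [Finset.sum_congr rfl fun q _ => step1 q, Finset.sum_comm, card_filter_cast]
  refine Finset.sum_congr rfl fun uv huv => ?_
  rw [mem_product] at huv
  by_cases hcr : uv.1.1 < uv.2.1 ∧ uv.2.2 < uv.1.2
  · have hgood : Good (resGraph B.g uv.1 uv.2) :=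
      good_resGraph (good_of B) huv.1 huv.2 hcr.1 hcr.2
    have hiff : ∀ q : StrandsDiagram n,
        ((uv.1.1 < uv.2.1 ∧ uv.2.2 < uv.1.2 ∧ resGraph B.g uv.1 uv.2 = q.g ∧
            invCount (resGraph B.g uv.1 uv.2) + 1 = invCount B.g) ∧
          (cod A = dom q ∧ c.g = compGraph A.g q.g ∧
            invCount c.g = invCount A.g + invCount q.g))
        ↔ (resGraph B.g uv.1 uv.2 = q.g ∧
            (invCount q.g + 1 = invCount B.g ∧ codG A.g = domG q.g ∧
              c.g = compGraph A.g q.g ∧ invCount c.g = invCount A.g + invCount q.g)) := by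
      intro q
      constructor
      · rintro ⟨⟨-, -, hG, hc4⟩, hcnd1, hcnd2, hcnd3⟩
        refine ⟨hG, ?_, hcnd1, hcnd2, hcnd3⟩
        rw [← hG]; exact hc4
      · rintro ⟨hG, hP1, hP2, hP3, hP4⟩
        refine ⟨⟨hcr.1, hcr.2, hG, ?_⟩, hP2, hP3, hP4⟩
        rw [hG]; exact hP1
    have hcoll' : (∑ q : StrandsDiagram n,
        if resGraph B.g uv.1 uv.2 = q.g ∧
            (invCount q.g + 1 = invCount B.g ∧ codG A.g = domG q.g ∧
              c.g = compGraph A.g q.g ∧ invCount c.g = invCount A.g + invCount q.g)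
          then (1 : ZMod 2) else 0)
        = if invCount (resGraph B.g uv.1 uv.2) + 1 = invCount B.g ∧
            codG A.g = domG (resGraph B.g uv.1 uv.2) ∧
            c.g = compGraph A.g (resGraph B.g uv.1 uv.2) ∧
            invCount c.g = invCount A.g + invCount (resGraph B.g uv.1 uv.2)
          then 1 else 0 :=
      sum_collapse (resGraph B.g uv.1 uv.2) hgood
        (fun g => invCount g + 1 = invCount B.g ∧ codG A.g = domG g ∧
          c.g = compGraph A.g g ∧ invCount c.g = invCount A.g + invCount g)
    rw [Finset.sum_congr rfl fun q _ => if_congr (hiff q) rfl rfl, hcoll']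
    apply if_congr _ rfl rfl
    constructor
    · intro hP; exact ⟨hcr, hP⟩
    · rintro ⟨-, hP⟩; exact hP
  · rw [Finset.sum_eq_zero, if_neg]
    · rintro ⟨hcrr, -⟩; exact hcr hcrr
    · intro q _
      rw [if_neg]
      rintro ⟨⟨hc1, hc2, -⟩, -⟩
      exact hcr ⟨hc1, hc2⟩

end SLB

namespace SLB
open StrandsDiagram Finset

variable {n : ℕ}

lemma keyIdentity (A B c : StrandsDiagram n) :
    (∑ d : StrandsDiagram n, if cod A = dom B ∧ d.g = compGraph A.g B.g ∧
        invCount d.g = invCount A.g + invCount B.g then delCoeff d c else 0)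
    = (∑ p : StrandsDiagram n, if cod p = dom B ∧ c.g = compGraph p.g B.g ∧
        invCount c.g = invCount p.g + invCount B.g then delCoeff A p else 0)
      + (∑ q : StrandsDiagram n, if cod A = dom q ∧ c.g = compGraph A.g q.g ∧
        invCount c.g = invCount A.g + invCount q.g then delCoeff B q else 0) := by
  rw [T0_eq, T1_eq, T2_eq]
  by_cases hcd : cod A = dom B
  · have hcd' : codG A.g = domG B.g := hcd
    rw [JA_eq_PA (good_of A) (good_of B) hcd' c.g, JB_eq_PB (good_of A) (good_of B) hcd' c.g]
    have hc := central (good_of A) (good_of B) hcd' c.g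
    by_cases hN : invCount (compGraph A.g B.g) = invCount A.g + invCount B.g
    · rw [if_pos ⟨hcd, hN⟩]
      have hdel : delCoeff (compSD A B) c
          = (((compGraph A.g B.g ×ˢ compGraph A.g B.g).filter fun pq =>
              pq.1.1 < pq.2.1 ∧ pq.2.2 < pq.1.2 ∧
              resGraph (compGraph A.g B.g) pq.1 pq.2 = c.g ∧
              invCount (resGraph (compGraph A.g B.g) pq.1 pq.2) + 1
                = invCount (compGraph A.g B.g)).card : ZMod 2) := rfl
      rw [hdel, JI_eq_PI (good_of A) (good_of B) hcd' c.g hN]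
      have hc2 := congrArg (fun m : ℕ => (m : ZMod 2)) hc
      push_cast at hc2
      rw [show ((2 : ZMod 2)) = 0 by decide, zero_mul, add_zero] at hc2
      exact hc2.symm
    · rw [if_neg (fun hhh => hN hhh.2)]
      rw [PI_empty (good_of A) (good_of B) hcd' c.g hN, Finset.card_empty] at hc
      have hc2 := congrArg (fun m : ℕ => (m : ZMod 2)) hc
      push_cast at hc2
      rw [show ((2 : ZMod 2)) = 0 by decide, zero_mul] at hc2
      rw [hc2]
      simp
  · rw [if_neg (fun hhh => hcd hhh.1)]
    have e1 : ((A.g ×ˢ A.g).filter fun pq => (pq.1.1 < pq.2.1 ∧ pq.2.2 < pq.1.2) ∧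
        invCount (resGraph A.g pq.1 pq.2) + 1 = invCount A.g ∧
        codG (resGraph A.g pq.1 pq.2) = domG B.g ∧
        c.g = compGraph (resGraph A.g pq.1 pq.2) B.g ∧
        invCount c.g = invCount (resGraph A.g pq.1 pq.2) + invCount B.g) = ∅ := by
      rw [Finset.filter_eq_empty_iff]
      intro pq hpq
      rw [mem_product] at hpq
      rintro ⟨-, -, hcod, -⟩
      apply hcd
      have hcc : codG A.g = domG B.g := by
        rw [← codG_resGraph hpq.1 hpq.2]; exact hcod
      exact hcc
    have e2 : ((B.g ×ˢ B.g).filter fun uv => (uv.1.1 < uv.2.1 ∧ uv.2.2 < uv.1.2) ∧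
        invCount (resGraph B.g uv.1 uv.2) + 1 = invCount B.g ∧
        codG A.g = domG (resGraph B.g uv.1 uv.2) ∧
        c.g = compGraph A.g (resGraph B.g uv.1 uv.2) ∧
        invCount c.g = invCount A.g + invCount (resGraph B.g uv.1 uv.2)) = ∅ := by
      rw [Finset.filter_eq_empty_iff]
      intro uv huv
      rw [mem_product] at huv
      rintro ⟨-, -, hcod, -⟩
      apply hcd
      have hcc : codG A.g = domG B.g := by
        rw [← domG_resGraph huv.1 huv.2]; exact hcod
      exact hcc
    rw [e1, e2]
    simp

lemma mul_ite_eq {c : Prop} [Decidable c] (y x : ZMod 2) :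
    y * (if c then x else 0) = (if c then y else 0) * x := by
  split_ifs <;> simp

lemma expand1 (a b : StrandsAlg n) (c : StrandsDiagram n) :
    sdel (smul' a b) c = ∑ A : StrandsDiagram n, ∑ B : StrandsDiagram n,
      (∑ d : StrandsDiagram n, if cod A = dom B ∧ d.g = compGraph A.g B.g ∧
          invCount d.g = invCount A.g + invCount B.g then delCoeff d c else 0)
        * (a A * b B) := by
  simp only [sdel, smul']
  simp only [Finset.mul_sum]
  rw [Finset.sum_comm]
  refine Finset.sum_congr rfl fun A _ => ?_
  rw [Finset.sum_comm]
  refine Finset.sum_congr rfl fun B _ => ?_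
  rw [Finset.sum_mul]
  refine Finset.sum_congr rfl fun d _ => ?_
  split_ifs with hco
  · rfl
  · simp

lemma expand2 (a b : StrandsAlg n) (c : StrandsDiagram n) :
    smul' (sdel a) b c = ∑ A : StrandsDiagram n, ∑ B : StrandsDiagram n,
      (∑ p : StrandsDiagram n, if cod p = dom B ∧ c.g = compGraph p.g B.g ∧
          invCount c.g = invCount p.g + invCount B.g then delCoeff A p else 0)
        * (a A * b B) := by
  simp only [sdel, smul']
  -- LHS: ∑ p ∑ B ite (cond p B c) ((∑ d delC d p * a d) * b B) 0
  have hstep : ∀ p B : StrandsDiagram n,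
      (if cod p = dom B ∧ c.g = compGraph p.g B.g ∧
          invCount c.g = invCount p.g + invCount B.g
        then (∑ d : StrandsDiagram n, delCoeff d p * a d) * b B else 0)
      = ∑ d : StrandsDiagram n, (if cod p = dom B ∧ c.g = compGraph p.g B.g ∧
          invCount c.g = invCount p.g + invCount B.g
        then delCoeff d p * a d * b B else 0) := by
    intro p B
    rw [Finset.sum_mul, ite_sum]
  rw [Finset.sum_congr rfl fun p _ => Finset.sum_congr rfl fun B _ => hstep p B]
  rw [Finset.sum_congr rfl fun p (_ : p ∈ Finset.univ) => Finset.sum_comm]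
  rw [Finset.sum_comm]
  refine Finset.sum_congr rfl fun d _ => ?_
  rw [Finset.sum_comm]
  refine Finset.sum_congr rfl fun B _ => ?_
  rw [Finset.sum_mul]
  refine Finset.sum_congr rfl fun p _ => ?_
  split_ifs
  · ring
  · simp

lemma expand3 (a b : StrandsAlg n) (c : StrandsDiagram n) :
    smul' a (sdel b) c = ∑ A : StrandsDiagram n, ∑ B : StrandsDiagram n,
      (∑ q : StrandsDiagram n, if cod A = dom q ∧ c.g = compGraph A.g q.g ∧
          invCount c.g = invCount A.g + invCount q.g then delCoeff B q else 0)
        * (a A * b B) := by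
  simp only [sdel, smul']
  have hstep : ∀ A q : StrandsDiagram n,
      (if cod A = dom q ∧ c.g = compGraph A.g q.g ∧
          invCount c.g = invCount A.g + invCount q.g
        then a A * ∑ d : StrandsDiagram n, delCoeff d q * b d else 0)
      = ∑ d : StrandsDiagram n, (if cod A = dom q ∧ c.g = compGraph A.g q.g ∧
          invCount c.g = invCount A.g + invCount q.g
        then a A * (delCoeff d q * b d) else 0) := by
    intro A q
    rw [Finset.mul_sum, ite_sum]
  rw [Finset.sum_congr rfl fun A _ => Finset.sum_congr rfl fun q _ => hstep A q]
  refine Finset.sum_congr rfl fun A _ => ?_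
  rw [Finset.sum_comm]
  refine Finset.sum_congr rfl fun d _ => ?_
  rw [Finset.sum_mul]
  refine Finset.sum_congr rfl fun q _ => ?_
  split_ifs
  · ring
  · simp

end SLB

open StrandsDiagram in
/-- The differential `∂` on the strands algebra `A(n)`
satisfies the Leibniz rule `∂(a·b) = ∂(a)·b + a·∂(b)`. -/
theorem strandsAlg_leibniz (n : ℕ) :
    ∀ a b : StrandsAlg n, sdel (smul' a b) = smul' (sdel a) b + smul' a (sdel b) := by
  intro a b
  funext c
  rw [Pi.add_apply, SLB.expand1 a b c, SLB.expand2 a b c, SLB.expand3 a b c,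
    ← Finset.sum_add_distrib]
  refine Finset.sum_congr rfl fun A _ => ?_
  rw [← Finset.sum_add_distrib]
  refine Finset.sum_congr rfl fun B _ => ?_
  rw [SLB.keyIdentity A B c, add_mul]
end
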